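/- arXiv:1209.3251 — 5 statements merged into one kernel-verified Lean document; each statement's English description precedes it below -/
import Mathlib

section
/- Let ⪯ be a left-ordering on a group G and let H be a ⪯-convex subgroup. Then there is a continuous injective map LO(H) → LO(G) whose image contains ⪯. Moreover, if in addition H is normal in G, then there is a continuous injective map LO(H) × LO(G/H) → LO(G) whose image contains ⪯. -/
structure LeftOrder (G : Type*) [Group G] where
  lt : G → G → Prop
  irrefl : ∀ a, ¬ lt a a
  trans : ∀ a b c, lt a b → lt b c → lt a c
  total : ∀ a b, lt a b ∨ a = b ∨ lt b a
  mul_left : ∀ a b c, lt a b → lt (c * a) (c * b)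

namespace LeftOrder

variable {G : Type*} [Group G]

def le (o : LeftOrder G) (a b : G) : Prop := o.lt a b ∨ a = b

noncomputable def cone (o : LeftOrder G) : G → Bool :=
  fun g => @decide (o.lt 1 g) (Classical.propDecidable _)

noncomputable instance : TopologicalSpace (LeftOrder G) :=
  TopologicalSpace.induced cone inferInstance

def restrict (o : LeftOrder G) (H : Subgroup G) : LeftOrder H where
  lt a b := o.lt a b
  irrefl a := o.irrefl a
  trans a b c hab hbc := o.trans _ _ _ hab hbc
  total a b := by
    rcases o.total (a : G) b with h | h | h
    · exact Or.inl h
    · exact Or.inr (Or.inl (Subtype.coe_injective h))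
    · exact Or.inr (Or.inr h)
  mul_left a b c h := by
    simpa using o.mul_left (a : G) b c h

def conj (o : LeftOrder G) (g : G) : LeftOrder G where
  lt a b := o.lt (g * a * g⁻¹) (g * b * g⁻¹)
  irrefl a := o.irrefl _
  trans a b c hab hbc := o.trans _ _ _ hab hbc
  total a b := by
    rcases o.total (g * a * g⁻¹) (g * b * g⁻¹) with h | h | h
    · exact Or.inl h
    · exact Or.inr (Or.inl (mul_left_cancel (mul_right_cancel h)))
    · exact Or.inr (Or.inr h)
  mul_left a b c h := by
    have key : ∀ x : G, g * (c * x) * g⁻¹ = (g * c * g⁻¹) * (g * x * g⁻¹) := by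
      intro x; group
    show o.lt (g * (c * a) * g⁻¹) (g * (c * b) * g⁻¹)
    rw [key a, key b]
    exact o.mul_left _ _ _ h

def IsConvex (o : LeftOrder G) (H : Subgroup G) : Prop :=
  ∀ g h₁ h₂ : G, h₁ ∈ H → h₂ ∈ H → o.le h₁ g → o.le g h₂ → g ∈ H

def IsConradian (o : LeftOrder G) : Prop :=
  ∀ f g : G, o.lt 1 f → o.lt 1 g → o.lt g (f * (g * g))

end LeftOrder

namespace LeftOrder

variable {G : Type*} [Group G] {o : LeftOrder G} {H : Subgroup G}

theorem myext {o₁ o₂ : LeftOrder G} (h : ∀ a b, o₁.lt a b ↔ o₂.lt a b) : o₁ = o₂ := by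
  cases o₁; cases o₂
  have : _ = _ := funext fun a => funext fun b => propext (h a b)
  simp only at this
  subst this
  rfl

theorem lt_iff_one {o : LeftOrder G} (a b : G) : o.lt a b ↔ o.lt 1 (a⁻¹ * b) := by
  constructor
  · intro h; simpa using o.mul_left _ _ a⁻¹ h
  · intro h; simpa using o.mul_left _ _ a h

theorem asymm {o : LeftOrder G} {a b : G} (h : o.lt a b) : ¬ o.lt b a :=
  fun h' => o.irrefl a (o.trans _ _ _ h h')

theorem inv_pos {o : LeftOrder G} {g : G} (h : o.lt g 1) : o.lt 1 g⁻¹ := by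
  simpa using o.mul_left _ _ g⁻¹ h

theorem inv_neg {o : LeftOrder G} {g : G} (h : o.lt 1 g) : o.lt g⁻¹ 1 := by
  simpa using o.mul_left _ _ g⁻¹ h

end LeftOrder

namespace LeftOrder

variable {G : Type*} [Group G] {o : LeftOrder G} {H : Subgroup G}

/-- right multiplication by an element of a convex subgroup preserves outer positivity -/
theorem pos_mul_right (hconv : o.IsConvex H) {g h : G} (hg : g ∉ H) (hh : h ∈ H)
    (hpos : o.lt 1 g) : o.lt 1 (g * h) := by
  rcases o.total 1 (g * h) with h1 | h1 | h1
  · exact h1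
  · exact absurd (show g ∈ H by
      have : g = h⁻¹ := eq_inv_of_mul_eq_one_left h1.symm
      exact this ▸ H.inv_mem hh) hg
  · exfalso
    have h2 : o.lt h g⁻¹ := by simpa [mul_assoc] using o.mul_left _ _ g⁻¹ h1
    have h3 : o.lt g⁻¹ 1 := inv_neg hpos
    have := hconv g⁻¹ h 1 hh H.one_mem (Or.inl h2) (Or.inl h3)
    exact hg (by simpa using H.inv_mem this)

theorem pos_mul_left (hconv : o.IsConvex H) {g h : G} (hg : g ∉ H) (hh : h ∈ H)
    (hpos : o.lt 1 g) : o.lt 1 (h * g) := by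
  rcases o.total 1 (h * g) with h1 | h1 | h1
  · exact h1
  · exact absurd (show g ∈ H by
      have : g = h⁻¹ := eq_inv_of_mul_eq_one_right h1.symm
      exact this ▸ H.inv_mem hh) hg
  · exfalso
    have h2 : o.lt g h⁻¹ := by
      have := o.mul_left _ _ h⁻¹ h1
      simpa [← mul_assoc] using this
    exact hg (hconv g 1 h⁻¹ H.one_mem (H.inv_mem hh) (Or.inl hpos) (Or.inl h2))

/-- iff versions -/
theorem pos_mul_right_iff (hconv : o.IsConvex H) {g h : G} (hg : g ∉ H) (hh : h ∈ H) :
    o.lt 1 (g * h) ↔ o.lt 1 g := by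
  constructor
  · intro h1
    have hg' : g * h ∉ H := fun hm => hg (by simpa using H.mul_mem hm (H.inv_mem hh))
    simpa using pos_mul_right hconv hg' (H.inv_mem hh) h1
  · exact pos_mul_right hconv hg hh

theorem pos_mul_left_iff (hconv : o.IsConvex H) {g h : G} (hg : g ∉ H) (hh : h ∈ H) :
    o.lt 1 (h * g) ↔ o.lt 1 g := by
  constructor
  · intro h1
    have hg' : h * g ∉ H := fun hm => hg (by simpa using H.mul_mem (H.inv_mem hh) hm)
    simpa [mul_assoc] using pos_mul_left hconv hg' (H.inv_mem hh) h1
  · exact pos_mul_left hconv hg hh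


section glue

variable (o' : LeftOrder H) (Q : G → Prop)

/-- the combined positivity predicate -/
def gpos (g : G) : Prop := (∃ hg : g ∈ H, o'.lt 1 ⟨g, hg⟩) ∨ Q g

theorem gpos_mul (hQmul : ∀ g g', Q g → Q g' → Q (g * g'))
    (hQleft : ∀ h g, h ∈ H → Q g → Q (h * g))
    (hQright : ∀ h g, h ∈ H → Q g → Q (g * h))
    {g g' : G} (h1 : gpos o' Q g) (h2 : gpos o' Q g') :
    gpos o' Q (g * g') := by
  rcases h1 with ⟨hg, hlt⟩ | h1
  · rcases h2 with ⟨hg', hlt'⟩ | h2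
    · refine Or.inl ⟨H.mul_mem hg hg', ?_⟩
      have e : (⟨g * g', H.mul_mem hg hg'⟩ : H) = ⟨g, hg⟩ * ⟨g', hg'⟩ := rfl
      rw [e]
      exact o'.trans _ _ _ hlt (by simpa using o'.mul_left _ _ ⟨g, hg⟩ hlt')
    · exact Or.inr (hQleft _ _ hg h2)
  · rcases h2 with ⟨hg', hlt'⟩ | h2
    · exact Or.inr (hQright _ _ hg' h1)
    · exact Or.inr (hQmul _ _ h1 h2)

/-- glue an order on `H` with an outer cone. -/
def glue (hQH : ∀ g, Q g → g ∉ H)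
    (hQtot : ∀ g, g ∉ H → Q g ∨ Q g⁻¹)
    (hQmul : ∀ g g', Q g → Q g' → Q (g * g'))
    (hQleft : ∀ h g, h ∈ H → Q g → Q (h * g))
    (hQright : ∀ h g, h ∈ H → Q g → Q (g * h)) : LeftOrder G where
  lt a b := gpos o' Q (a⁻¹ * b)
  irrefl a := by
    intro h
    rcases h with ⟨hg, hlt⟩ | h
    · have e : (⟨a⁻¹ * a, hg⟩ : H) = 1 := by ext; simp
      rw [e] at hlt
      exact o'.irrefl 1 hlt
    · exact hQH _ h (by simpa using H.one_mem)
  trans a b c hab hbc := by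
    have := gpos_mul o' Q hQmul hQleft hQright hab hbc
    simpa [mul_assoc] using this
  total a b := by
    by_cases hg : a⁻¹ * b ∈ H
    · rcases o'.total 1 ⟨a⁻¹ * b, hg⟩ with h | h | h
      · exact Or.inl (Or.inl ⟨hg, h⟩)
      · refine Or.inr (Or.inl ?_)
        have : a⁻¹ * b = 1 := by
          have := congrArg (Subtype.val) h
          simpa using this.symm
        exact (inv_mul_eq_one.mp this)
      · refine Or.inr (Or.inr (Or.inl ⟨by simpa using H.inv_mem hg, ?_⟩))
        have := inv_pos (o := o') h
        have e : (⟨a⁻¹ * b, hg⟩ : H)⁻¹ = ⟨b⁻¹ * a, by simpa using H.inv_mem hg⟩ := by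
          ext; simp
        rwa [e] at this
    · rcases hQtot _ hg with h | h
      · exact Or.inl (Or.inr h)
      · refine Or.inr (Or.inr (Or.inr ?_))
        have e : (a⁻¹ * b)⁻¹ = b⁻¹ * a := by group
        rwa [e] at h
  mul_left a b c h := by
    have e : (c * a)⁻¹ * (c * b) = a⁻¹ * b := by group
    show gpos o' Q _
    rw [e]
    exact h

theorem glue_lt_iff (hQH hQtot hQmul hQleft hQright) (a b : G) :
    (glue o' Q hQH hQtot hQmul hQleft hQright).lt a b ↔ gpos o' Q (a⁻¹ * b) := Iff.rfl

end glue


variable {o : LeftOrder G} {H : Subgroup G}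

theorem one_lt_mul' {a b : G} (ha : o.lt 1 a) (hb : o.lt 1 b) : o.lt 1 (a * b) :=
  o.trans _ _ _ ha (by simpa using o.mul_left _ _ a hb)

theorem not_mem_mul_right {g h : G} (hg : g ∉ H) (hh : h ∈ H) : g * h ∉ H :=
  fun hm => hg (by simpa using H.mul_mem hm (H.inv_mem hh))

theorem not_mem_mul_left {g h : G} (hg : g ∉ H) (hh : h ∈ H) : h * g ∉ H :=
  fun hm => hg (by simpa using H.mul_mem (H.inv_mem hh) hm)

theorem pos_mul_not_mem (hconv : o.IsConvex H) {w₁ w₂ : G} (h1 : w₁ ∉ H) (h2 : w₂ ∉ H)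
    (p1 : o.lt 1 w₁) (p2 : o.lt 1 w₂) : w₁ * w₂ ∉ H := by
  intro hm
  have hw2 : w₂ = w₁⁻¹ * (w₁ * w₂) := by group
  have h1' : w₁⁻¹ ∉ H := fun hmm => h1 (by simpa using H.inv_mem hmm)
  have : o.lt 1 w₁⁻¹ := by
    rw [hw2] at p2
    exact (pos_mul_right_iff hconv h1' hm).mp p2
  exact o.irrefl 1 (o.trans _ _ _ this (inv_neg p1))

/-- transfer of comparison between coset representatives -/
theorem coset_transfer (hconv : o.IsConvex H) {g₁ g₂ g₁' g₂' : G}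
    (e₁ : (g₁ : G ⧸ H) = (g₁' : G ⧸ H)) (e₂ : (g₂ : G ⧸ H) = (g₂' : G ⧸ H))
    (hnm : g₁⁻¹ * g₂ ∉ H) (hlt : o.lt g₁ g₂) :
    g₁'⁻¹ * g₂' ∉ H ∧ o.lt g₁' g₂' := by
  have h₁ : g₁⁻¹ * g₁' ∈ H := QuotientGroup.eq.mp e₁
  have h₂ : g₂⁻¹ * g₂' ∈ H := QuotientGroup.eq.mp e₂
  have key : g₁'⁻¹ * g₂' = (g₁⁻¹ * g₁')⁻¹ * ((g₁⁻¹ * g₂) * (g₂⁻¹ * g₂')) := by group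
  have hpos : o.lt 1 (g₁⁻¹ * g₂) := (lt_iff_one g₁ g₂).mp hlt
  have hr : o.lt 1 ((g₁⁻¹ * g₂) * (g₂⁻¹ * g₂')) := pos_mul_right hconv hnm h₂ hpos
  have hrm : (g₁⁻¹ * g₂) * (g₂⁻¹ * g₂') ∉ H := not_mem_mul_right hnm h₂
  have hl : o.lt 1 ((g₁⁻¹ * g₁')⁻¹ * ((g₁⁻¹ * g₂) * (g₂⁻¹ * g₂'))) :=
    pos_mul_left hconv hrm (H.inv_mem h₁) hr
  have hlm : (g₁⁻¹ * g₁')⁻¹ * ((g₁⁻¹ * g₂) * (g₂⁻¹ * g₂')) ∉ H :=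
    not_mem_mul_left hrm (H.inv_mem h₁)
  rw [← key] at hl hlm
  exact ⟨hlm, (lt_iff_one g₁' g₂').mpr hl⟩

section quot

variable [hn : H.Normal]

/-- the quotient ordering on `G ⧸ H` -/
def quotOrder (hconv : o.IsConvex H) : LeftOrder (G ⧸ H) where
  lt x y := ∃ g₁ g₂ : G, (g₁ : G ⧸ H) = x ∧ (g₂ : G ⧸ H) = y ∧ g₁⁻¹ * g₂ ∉ H ∧ o.lt g₁ g₂
  irrefl x := by
    rintro ⟨g₁, g₂, e₁, e₂, hnm, hlt⟩
    exact hnm (QuotientGroup.eq.mp (e₁.trans e₂.symm))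
  trans x y z := by
    rintro ⟨g₁, g₂, e₁, e₂, hnm12, h12⟩ ⟨g₂', g₃, e₂', e₃, hnm23, h23⟩
    obtain ⟨hnm23', h23'⟩ := coset_transfer hconv (e₂'.trans e₂.symm) rfl hnm23 h23
    refine ⟨g₁, g₃, e₁, e₃, ?_, o.trans _ _ _ h12 h23'⟩
    have key : g₁⁻¹ * g₃ = (g₁⁻¹ * g₂) * (g₂⁻¹ * g₃) := by group
    rw [key]
    exact pos_mul_not_mem hconv hnm12 hnm23' ((lt_iff_one _ _).mp h12)
      ((lt_iff_one _ _).mp h23')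
  total x y := by
    obtain ⟨g₁, rfl⟩ := QuotientGroup.mk_surjective x
    obtain ⟨g₂, rfl⟩ := QuotientGroup.mk_surjective y
    by_cases hm : g₁⁻¹ * g₂ ∈ H
    · exact Or.inr (Or.inl (QuotientGroup.eq.mpr hm))
    · rcases o.total g₁ g₂ with h | h | h
      · exact Or.inl ⟨g₁, g₂, rfl, rfl, hm, h⟩
      · exact absurd (by rw [h]; simpa using H.one_mem) hm
      · refine Or.inr (Or.inr ⟨g₂, g₁, rfl, rfl, ?_, h⟩)
        have : g₂⁻¹ * g₁ = (g₁⁻¹ * g₂)⁻¹ := by group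
        rw [this]
        exact fun hmm => hm (by simpa using H.inv_mem hmm)
  mul_left x y c := by
    rintro ⟨g₁, g₂, e₁, e₂, hnm, hlt⟩
    obtain ⟨a, rfl⟩ := QuotientGroup.mk_surjective c
    refine ⟨a * g₁, a * g₂, ?_, ?_, ?_, o.mul_left _ _ a hlt⟩
    · rw [QuotientGroup.mk_mul, e₁]
    · rw [QuotientGroup.mk_mul, e₂]
    · have : (a * g₁)⁻¹ * (a * g₂) = g₁⁻¹ * g₂ := by group
      rw [this]; exact hnm

theorem quotOrder_lt_one (hconv : o.IsConvex H) {g : G} (hg : g ∉ H) :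
    (quotOrder hconv).lt 1 (g : G ⧸ H) ↔ o.lt 1 g := by
  constructor
  · rintro ⟨g₁, g₂, e₁, e₂, hnm, hlt⟩
    have e₁' : (g₁ : G ⧸ H) = ((1 : G) : G ⧸ H) := by rw [e₁]; simp
    exact (coset_transfer hconv e₁' e₂ hnm hlt).2
  · intro h
    exact ⟨1, g, by simp, rfl, by simpa using hg, h⟩

end quot


theorem glue_lt_one (o' : LeftOrder H) (Q) (hQH hQtot hQmul hQleft hQright) (g : G) :
    (glue o' Q hQH hQtot hQmul hQleft hQright).lt 1 g ↔ gpos o' Q g := by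
  rw [glue_lt_iff]
  simp only [inv_one, one_mul]

theorem glue_lt_one_mem (o' : LeftOrder H) (Q) (hQH hQtot hQmul hQleft hQright) {g : G}
    (hg : g ∈ H) :
    (glue o' Q hQH hQtot hQmul hQleft hQright).lt 1 g ↔ o'.lt 1 ⟨g, hg⟩ := by
  rw [glue_lt_one]
  constructor
  · rintro (⟨h, hl⟩ | hq)
    · exact hl
    · exact absurd hg (hQH _ hq)
  · intro h
    exact Or.inl ⟨hg, h⟩

theorem glue_lt_one_not_mem (o' : LeftOrder H) (Q) (hQH hQtot hQmul hQleft hQright) {g : G}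
    (hg : g ∉ H) :
    (glue o' Q hQH hQtot hQmul hQleft hQright).lt 1 g ↔ Q g := by
  rw [glue_lt_one]
  constructor
  · rintro (⟨h, _⟩ | hq)
    · exact absurd h hg
    · exact hq
  · exact Or.inr

theorem glue_lt_coe (o' : LeftOrder H) (Q) (hQH hQtot hQmul hQleft hQright) (a b : H) :
    (glue o' Q hQH hQtot hQmul hQleft hQright).lt ↑a ↑b ↔ o'.lt a b := by
  rw [glue_lt_iff]
  have hmem : (a : G)⁻¹ * ↑b ∈ H := H.mul_mem (H.inv_mem a.2) b.2
  have e : (⟨(a : G)⁻¹ * ↑b, hmem⟩ : H) = a⁻¹ * b := by ext; simp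
  constructor
  · rintro (⟨hg, hl⟩ | hq)
    · rw [e] at hl
      exact (lt_iff_one a b).mpr hl
    · exact absurd hmem (hQH _ hq)
  · intro h
    refine Or.inl ⟨hmem, ?_⟩
    rw [e]
    exact (lt_iff_one a b).mp h

/-- the embedding `LO(H) → LO(G)` -/
def emb1 (hconv : o.IsConvex H) : LeftOrder H → LeftOrder G := fun o' =>
  glue o' (fun g => g ∉ H ∧ o.lt 1 g)
    (fun _ h => h.1)
    (fun g hg => by
      rcases o.total 1 g with h | h | h
      · exact Or.inl ⟨hg, h⟩
      · exact absurd (by rw [← h]; exact H.one_mem) hg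
      · exact Or.inr ⟨fun hm => hg (by simpa using H.inv_mem hm), inv_pos h⟩)
    (fun g g' h1 h2 =>
      ⟨pos_mul_not_mem hconv h1.1 h2.1 h1.2 h2.2, one_lt_mul' h1.2 h2.2⟩)
    (fun h g hh hq => ⟨not_mem_mul_left hq.1 hh, pos_mul_left hconv hq.1 hh hq.2⟩)
    (fun h g hh hq => ⟨not_mem_mul_right hq.1 hh, pos_mul_right hconv hq.1 hh hq.2⟩)

section part2

variable [hn : H.Normal]

/-- the embedding `LO(H) × LO(G/H) → LO(G)` -/
def emb2 (hconv : o.IsConvex H) : LeftOrder H × LeftOrder (G ⧸ H) → LeftOrder G := fun p =>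
  glue p.1 (fun g => g ∉ H ∧ p.2.lt 1 (g : G ⧸ H))
    (fun _ h => h.1)
    (fun g hg => by
      have hne : (g : G ⧸ H) ≠ 1 := fun h => hg ((QuotientGroup.eq_one_iff g).mp h)
      rcases p.2.total 1 (g : G ⧸ H) with h | h | h
      · exact Or.inl ⟨hg, h⟩
      · exact absurd h.symm hne
      · refine Or.inr ⟨fun hm => hg (by simpa using H.inv_mem hm), ?_⟩
        have := inv_pos (o := p.2) h
        rwa [show ((g : G ⧸ H))⁻¹ = ((g⁻¹ : G) : G ⧸ H) by simp] at this)
    (fun g g' h1 h2 => by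
      have hm : g * g' ∉ H := by
        intro hm
        have e1 : ((g * g' : G) : G ⧸ H) = 1 := (QuotientGroup.eq_one_iff _).mpr hm
        rw [QuotientGroup.mk_mul] at e1
        have e : ((g' : G) : G ⧸ H) = ((g : G ⧸ H))⁻¹ := eq_inv_of_mul_eq_one_right e1
        have h2' := h2.2
        rw [e] at h2'
        exact p.2.irrefl 1 (p.2.trans _ _ _ h2' (inv_neg h1.2))
      refine ⟨hm, ?_⟩
      rw [QuotientGroup.mk_mul]
      exact one_lt_mul' h1.2 h2.2)
    (fun h g hh hq => by
      refine ⟨not_mem_mul_left hq.1 hh, ?_⟩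
      rw [QuotientGroup.mk_mul, (QuotientGroup.eq_one_iff h).mpr hh, one_mul]
      exact hq.2)
    (fun h g hh hq => by
      refine ⟨not_mem_mul_right hq.1 hh, ?_⟩
      rw [QuotientGroup.mk_mul, (QuotientGroup.eq_one_iff h).mpr hh, mul_one]
      exact hq.2)

end part2


theorem emb1_lt_coe (hconv : o.IsConvex H) (o' : LeftOrder H) (a b : H) :
    (emb1 hconv o').lt ↑a ↑b ↔ o'.lt a b := glue_lt_coe _ _ _ _ _ _ _ a b

theorem emb1_lt_one_mem (hconv : o.IsConvex H) (o' : LeftOrder H) {g : G} (hg : g ∈ H) :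
    (emb1 hconv o').lt 1 g ↔ o'.lt 1 ⟨g, hg⟩ := glue_lt_one_mem _ _ _ _ _ _ _ hg

theorem emb1_lt_one_not_mem (hconv : o.IsConvex H) (o' : LeftOrder H) {g : G} (hg : g ∉ H) :
    (emb1 hconv o').lt 1 g ↔ o.lt 1 g :=
  Iff.trans (glue_lt_one_not_mem _ _ _ _ _ _ _ hg) ⟨And.right, fun h => ⟨hg, h⟩⟩

theorem emb1_continuous (hconv : o.IsConvex H) : Continuous (emb1 hconv) := by
  refine continuous_induced_rng.mpr (continuous_pi fun g => ?_)
  by_cases hg : g ∈ H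
  · have key : (fun o' : LeftOrder H => cone (emb1 hconv o') g)
        = fun o' => cone o' ⟨g, hg⟩ := by
      funext o'
      simp only [cone]
      exact decide_eq_decide.mpr (emb1_lt_one_mem hconv o' hg)
    show Continuous fun o' : LeftOrder H => cone (emb1 hconv o') g
    rw [key]
    have hc : Continuous (cone : LeftOrder H → H → Bool) := continuous_induced_dom
    exact (continuous_apply _).comp hc
  · have key : (fun o' : LeftOrder H => cone (emb1 hconv o') g) = fun _ => cone o g := by
      funext o'
      simp only [cone]
      exact decide_eq_decide.mpr (emb1_lt_one_not_mem hconv o' hg)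
    show Continuous fun o' : LeftOrder H => cone (emb1 hconv o') g
    rw [key]
    exact continuous_const

theorem emb1_injective (hconv : o.IsConvex H) : Function.Injective (emb1 hconv) := by
  intro o₁ o₂ h
  refine myext fun a b => ?_
  rw [← emb1_lt_coe hconv o₁ a b, ← emb1_lt_coe hconv o₂ a b, h]

theorem emb1_restrict (hconv : o.IsConvex H) : emb1 hconv (o.restrict H) = o := by
  refine myext fun a b => ?_
  rw [lt_iff_one, lt_iff_one (o := o)]
  by_cases hg : a⁻¹ * b ∈ H
  · rw [emb1_lt_one_mem hconv _ hg]
    show o.lt ((1 : H) : G) (a⁻¹ * b) ↔ _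
    rw [OneMemClass.coe_one]
  · exact emb1_lt_one_not_mem hconv _ hg

section part2w

variable [hn : H.Normal]

theorem emb2_lt_coe (hconv : o.IsConvex H) (p : LeftOrder H × LeftOrder (G ⧸ H)) (a b : H) :
    (emb2 hconv p).lt ↑a ↑b ↔ p.1.lt a b := glue_lt_coe _ _ _ _ _ _ _ a b

theorem emb2_lt_one_mem (hconv : o.IsConvex H) (p : LeftOrder H × LeftOrder (G ⧸ H)) {g : G}
    (hg : g ∈ H) : (emb2 hconv p).lt 1 g ↔ p.1.lt 1 ⟨g, hg⟩ :=
  glue_lt_one_mem _ _ _ _ _ _ _ hg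

theorem emb2_lt_one_not_mem (hconv : o.IsConvex H) (p : LeftOrder H × LeftOrder (G ⧸ H))
    {g : G} (hg : g ∉ H) : (emb2 hconv p).lt 1 g ↔ p.2.lt 1 (g : G ⧸ H) :=
  Iff.trans (glue_lt_one_not_mem _ _ _ _ _ _ _ hg) ⟨And.right, fun h => ⟨hg, h⟩⟩

theorem emb2_continuous (hconv : o.IsConvex H) : Continuous (emb2 hconv) := by
  refine continuous_induced_rng.mpr (continuous_pi fun g => ?_)
  by_cases hg : g ∈ H
  · have key : (fun p : LeftOrder H × LeftOrder (G ⧸ H) => cone (emb2 hconv p) g)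
        = fun p => cone p.1 ⟨g, hg⟩ := by
      funext p
      simp only [cone]
      exact decide_eq_decide.mpr (emb2_lt_one_mem hconv p hg)
    show Continuous fun p : LeftOrder H × LeftOrder (G ⧸ H) => cone (emb2 hconv p) g
    rw [key]
    have hc : Continuous (cone : LeftOrder H → H → Bool) := continuous_induced_dom
    exact (continuous_apply _).comp (hc.comp continuous_fst)
  · have key : (fun p : LeftOrder H × LeftOrder (G ⧸ H) => cone (emb2 hconv p) g)
        = fun p => cone p.2 (g : G ⧸ H) := by
      funext p
      simp only [cone]
      exact decide_eq_decide.mpr (emb2_lt_one_not_mem hconv p hg)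
    show Continuous fun p : LeftOrder H × LeftOrder (G ⧸ H) => cone (emb2 hconv p) g
    rw [key]
    have hc : Continuous (cone : LeftOrder (G ⧸ H) → G ⧸ H → Bool) := continuous_induced_dom
    exact (continuous_apply _).comp (hc.comp continuous_snd)

theorem emb2_injective (hconv : o.IsConvex H) : Function.Injective (emb2 hconv) := by
  intro p₁ p₂ h
  have h1 : p₁.1 = p₂.1 := by
    refine myext fun a b => ?_
    rw [← emb2_lt_coe hconv p₁ a b, ← emb2_lt_coe hconv p₂ a b, h]
  have h2 : p₁.2 = p₂.2 := by
    refine myext fun x y => ?_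
    rw [lt_iff_one (o := p₁.2), lt_iff_one (o := p₂.2)]
    generalize x⁻¹ * y = z
    obtain ⟨g, rfl⟩ := QuotientGroup.mk_surjective z
    by_cases hg : g ∈ H
    · rw [(QuotientGroup.eq_one_iff g).mpr hg]
      exact iff_of_false (p₁.2.irrefl 1) (p₂.2.irrefl 1)
    · rw [← emb2_lt_one_not_mem hconv p₁ hg, ← emb2_lt_one_not_mem hconv p₂ hg, h]
  exact Prod.ext h1 h2

theorem emb2_restrict (hconv : o.IsConvex H) :
    emb2 hconv (o.restrict H, quotOrder hconv) = o := by
  refine myext fun a b => ?_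
  rw [lt_iff_one, lt_iff_one (o := o)]
  by_cases hg : a⁻¹ * b ∈ H
  · rw [emb2_lt_one_mem hconv _ hg]
    show o.lt ((1 : H) : G) (a⁻¹ * b) ↔ _
    rw [OneMemClass.coe_one]
  · rw [emb2_lt_one_not_mem hconv _ hg]
    exact quotOrder_lt_one hconv hg

end part2w

end LeftOrder


/-- If `H` is a convex subgroup of `(G, ⪯)` then there is a
continuous injection `LO(H) → LO(G)` with `⪯` in its image; if moreover `H` is
normal there is a continuous injection `LO(H) × LO(G/H) → LO(G)` with `⪯` in its
image. -/
theorem exists_continuous_injection_of_convex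
    {G : Type*} [Group G] (o : LeftOrder G) (H : Subgroup G)
    (hconv : o.IsConvex H) :
    (∃ Φ : LeftOrder H → LeftOrder G,
        Continuous Φ ∧ Function.Injective Φ ∧ o ∈ Set.range Φ) ∧
    (∀ hn : H.Normal,
        haveI := hn
        ∃ Ψ : LeftOrder H × LeftOrder (G ⧸ H) → LeftOrder G,
          Continuous Ψ ∧ Function.Injective Ψ ∧ o ∈ Set.range Ψ) := by
  constructor
  · exact ⟨LeftOrder.emb1 hconv, LeftOrder.emb1_continuous hconv,
      LeftOrder.emb1_injective hconv, ⟨o.restrict H, LeftOrder.emb1_restrict hconv⟩⟩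
  · intro hn
    exact ⟨LeftOrder.emb2 hconv, LeftOrder.emb2_continuous hconv,
      LeftOrder.emb2_injective hconv,
      ⟨(o.restrict H, LeftOrder.quotOrder hconv), LeftOrder.emb2_restrict hconv⟩⟩
end

section
/- Let ⪯ be a left-ordering on a group G and let H be a normal ⪯-convex subgroup. If the restriction of ⪯ to H is Conradian and the quotient ordering induced by ⪯ on G/H is Conradian, then ⪯ is Conradian. -/
/-- If `H` is a normal convex subgroup of `(G, ⪯)`, the
restriction of `⪯` to `H` is Conradian, and the quotient ordering induced on
`G/H` is Conradian, then `⪯` is Conradian.  The quotient ordering `⪯*` is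
characterized by `g₁H ≺* g₂H ↔ ∀ h₁ h₂ ∈ H, g₁h₁ ≺ g₂h₂`. -/
theorem isConradian_of_convex_normal_extension
    {G : Type*} [Group G] (o : LeftOrder G) (H : Subgroup G) [H.Normal]
    (hconv : o.IsConvex H)
    (o' : LeftOrder (G ⧸ H))
    (hquot : ∀ a b : G,
      o'.lt ((a : G ⧸ H)) ((b : G ⧸ H)) ↔
        ∀ h₁ ∈ H, ∀ h₂ ∈ H, o.lt (a * h₁) (b * h₂))
    (hH : (o.restrict H).IsConradian)
    (hGH : o'.IsConradian) :
    o.IsConradian := by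
  -- helper: a positive element outside H has positive coset
  have pos_quot : ∀ x : G, o.lt 1 x → x ∉ H → o'.lt 1 ((x : G ⧸ H)) := by
    intro x hx hxH
    rcases o'.total ((1 : G) : G ⧸ H) ((x : G ⧸ H)) with h | h | h
    · simpa using h
    · exfalso
      apply hxH
      have := QuotientGroup.eq.mp h
      simpa using this
    · exfalso
      have := (hquot x 1).mp h 1 H.one_mem 1 H.one_mem
      simp only [mul_one] at this
      exact o.irrefl x (o.trans _ _ _ this hx)
  -- helper: strict quotient inequality gives strict inequality
  have quot_lt : ∀ a b : G, o'.lt ((a : G ⧸ H)) ((b : G ⧸ H)) → o.lt a b := by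
    intro a b h
    have := (hquot a b).mp h 1 H.one_mem 1 H.one_mem
    simpa using this
  intro f g hf hg
  by_cases hfH : f ∈ H
  · by_cases hgH : g ∈ H
    · exact hH ⟨f, hfH⟩ ⟨g, hgH⟩ hf hg
    · -- f ∈ H, g ∉ H : coset of f*(g*g) equals g*g
      have hq : o'.lt 1 ((g : G ⧸ H)) := pos_quot g hg hgH
      have hgg : o'.lt ((g : G ⧸ H)) ((g : G ⧸ H) * (g : G ⧸ H)) := by
        have := o'.mul_left _ _ ((g : G ⧸ H)) hq
        simpa using this
      apply quot_lt
      have hcos : ((f * (g * g) : G) : G ⧸ H) = ((g : G ⧸ H) * (g : G ⧸ H)) := by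
        have : ((f : G ⧸ H)) = 1 := by
          simpa using (QuotientGroup.eq.mpr (by simpa using H.inv_mem hfH) :
            ((f : G) : G ⧸ H) = ((1 : G) : G ⧸ H))
        simp only [QuotientGroup.mk_mul]
        rw [this, one_mul]
      rw [hcos]
      exact hgg
  · have hfq : o'.lt 1 ((f : G ⧸ H)) := pos_quot f hf hfH
    by_cases hgH : g ∈ H
    · -- g ∈ H : coset of g is 1, coset of f*(g*g) is f
      apply quot_lt
      have hg1 : ((g : G) : G ⧸ H) = 1 := by
        simpa using (QuotientGroup.eq.mpr (by simpa using H.inv_mem hgH) :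
          ((g : G) : G ⧸ H) = ((1 : G) : G ⧸ H))
      have hcos : ((f * (g * g) : G) : G ⧸ H) = ((f : G ⧸ H)) := by
        simp only [QuotientGroup.mk_mul]
        rw [hg1]; simp
      rw [hcos, hg1]
      exact hfq
    · have hgq : o'.lt 1 ((g : G ⧸ H)) := pos_quot g hg hgH
      apply quot_lt
      have := hGH _ _ hfq hgq
      simpa using this
end

section
/- Let G be a Tararin group with rational series {1} = G₀ ◁ G₁ ◁ ⋯ ◁ G_m = G. Then G admits exactly 2^m left-orderings, every left-ordering of G is Conradian, and in every left-ordering of G the convex subgroups are exactly G₀, G₁, …, G_m. -/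
namespace LeftOrder

variable {G : Type*} [Group G]

theorem ext' {o₁ o₂ : LeftOrder G} (h : o₁.lt = o₂.lt) : o₁ = o₂ := by
  cases o₁; cases o₂; simp_all

lemma lt_iff_pos (o : LeftOrder G) (a b : G) : o.lt a b ↔ o.lt 1 (a⁻¹ * b) := by
  constructor
  · intro h; simpa using o.mul_left _ _ a⁻¹ h
  · intro h; simpa using o.mul_left _ _ a h

lemma pos_mul {o : LeftOrder G} {a b : G} (ha : o.lt 1 a) (hb : o.lt 1 b) :
    o.lt 1 (a * b) :=
  o.trans _ _ _ ha (by simpa using o.mul_left 1 b a hb)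

lemma not_pos_inv {o : LeftOrder G} {a : G} (ha : o.lt 1 a) : ¬ o.lt 1 a⁻¹ := by
  intro h
  exact o.irrefl 1 (by simpa using pos_mul ha h)

lemma neg_iff_pos_inv (o : LeftOrder G) (a : G) : o.lt a 1 ↔ o.lt 1 a⁻¹ := by
  simpa using o.lt_iff_pos a 1

lemma pos_or_pos_inv {o : LeftOrder G} {a : G} (ha : a ≠ 1) :
    o.lt 1 a ∨ o.lt 1 a⁻¹ := by
  rcases o.total 1 a with h | h | h
  · exact Or.inl h
  · exact absurd h.symm ha
  · exact Or.inr ((o.neg_iff_pos_inv a).1 h)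

lemma ne_of_lt {o : LeftOrder G} {a b : G} (h : o.lt a b) : a ≠ b := by
  rintro rfl; exact o.irrefl a h

lemma le_refl (o : LeftOrder G) (a : G) : o.le a a := Or.inr rfl

lemma le_of_lt {o : LeftOrder G} {a b : G} (h : o.lt a b) : o.le a b := Or.inl h

lemma lt_of_le_of_lt {o : LeftOrder G} {a b c : G} (h1 : o.le a b) (h2 : o.lt b c) :
    o.lt a c := by
  rcases h1 with h1 | rfl
  · exact o.trans _ _ _ h1 h2
  · exact h2

lemma lt_of_lt_of_le {o : LeftOrder G} {a b c : G} (h1 : o.lt a b) (h2 : o.le b c) :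
    o.lt a c := by
  rcases h2 with h2 | rfl
  · exact o.trans _ _ _ h1 h2
  · exact h1

lemma le_trans {o : LeftOrder G} {a b c : G} (h1 : o.le a b) (h2 : o.le b c) :
    o.le a c := by
  rcases h1 with h1 | rfl
  · exact Or.inl (lt_of_lt_of_le h1 h2)
  · exact h2

lemma le_antisymm {o : LeftOrder G} {a b : G} (h1 : o.le a b) (h2 : o.le b a) : a = b := by
  rcases h1 with h1 | rfl
  · rcases h2 with h2 | rfl
    · exact absurd (o.trans _ _ _ h1 h2) (o.irrefl a)
    · rfl
  · rfl

lemma le_mul_left {o : LeftOrder G} {a b : G} (c : G) (h : o.le a b) :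
    o.le (c * a) (c * b) := by
  rcases h with h | rfl
  · exact Or.inl (o.mul_left _ _ _ h)
  · exact Or.inr rfl

lemma le_iff_pos (o : LeftOrder G) (a b : G) : o.le a b ↔ o.le 1 (a⁻¹ * b) := by
  unfold le
  rw [o.lt_iff_pos a b]
  constructor
  · rintro (h | rfl); exacts [Or.inl h, Or.inr (by group)]
  · rintro (h | h)
    · exact Or.inl h
    · exact Or.inr (by rw [← mul_left_cancel_iff (a := a⁻¹), ← h]; group)

lemma pos_pow {o : LeftOrder G} {a : G} (ha : o.lt 1 a) :
    ∀ n : ℕ, n ≠ 0 → o.lt 1 (a ^ n) := by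
  intro n hn
  induction n with
  | zero => exact absurd rfl hn
  | succ k ih =>
    rcases Nat.eq_zero_or_pos k with rfl | hk
    · simpa using ha
    · rw [pow_succ]
      exact pos_mul (ih hk.ne') ha

lemma le_one_pow {o : LeftOrder G} {a : G} (ha : o.lt 1 a) (n : ℕ) :
    o.le 1 (a ^ n) := by
  rcases Nat.eq_zero_or_pos n with rfl | hn
  · simp [le]
  · exact le_of_lt (pos_pow ha n hn.ne')

lemma le_pow_self {o : LeftOrder G} {a : G} (ha : o.lt 1 a) {n : ℕ} (hn : 1 ≤ n) :
    o.le a (a ^ n) := by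
  induction n with
  | zero => omega
  | succ k ih =>
    rcases Nat.eq_zero_or_pos k with rfl | hk
    · simp [le]
    · refine le_trans (ih hk) ?_
      rw [pow_succ]
      exact le_of_lt (by simpa using o.mul_left 1 a (a ^ k) ha)

lemma pow_le_self {o : LeftOrder G} {a : G} (ha : o.lt a 1) {n : ℕ} (hn : 1 ≤ n) :
    o.le (a ^ n) a := by
  induction n with
  | zero => omega
  | succ k ih =>
    rcases Nat.eq_zero_or_pos k with rfl | hk
    · simp [le]
    · refine le_trans ?_ (ih hk)
      rw [pow_succ]
      exact le_of_lt (by simpa using o.mul_left a 1 (a ^ k) ha)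

lemma isConvex_bot (o : LeftOrder G) : o.IsConvex ⊥ := by
  intro g h₁ h₂ m1 m2 l1 l2
  simp only [Subgroup.mem_bot] at *
  subst m1; subst m2
  exact (le_antisymm l2 l1).symm ▸ rfl

lemma isConvex_top (o : LeftOrder G) : o.IsConvex ⊤ := by
  intro g _ _ _ _ _ _; trivial

lemma IsConvex.of_pow_mem {o : LeftOrder G} {H : Subgroup G} (hH : o.IsConvex H)
    {a : G} {n : ℕ} (hn : n ≠ 0) (h : a ^ n ∈ H) : a ∈ H := by
  rcases eq_or_ne a 1 with rfl | ha
  · exact H.one_mem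
  rcases pos_or_pos_inv (o := o) ha with hp | hp
  · exact hH a 1 (a ^ n) H.one_mem h (le_of_lt hp) (le_pow_self hp (Nat.one_le_iff_ne_zero.2 hn))
  · have hneg : o.lt a 1 := (o.neg_iff_pos_inv a).2 hp
    exact hH a (a ^ n) 1 h H.one_mem (pow_le_self hneg (Nat.one_le_iff_ne_zero.2 hn)) (le_of_lt hneg)

lemma IsConvex.of_zpow_mem {o : LeftOrder G} {H : Subgroup G} (hH : o.IsConvex H)
    {a : G} {k : ℤ} (hk : k ≠ 0) (h : a ^ k ∈ H) : a ∈ H := by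
  have : a ^ (k.natAbs) ∈ H := by
    rcases Int.natAbs_eq k with he | he
    · rw [he] at h; rw [← zpow_natCast]; exact h
    · rw [he] at h
      have := H.inv_mem h
      rw [← zpow_neg, neg_neg, zpow_natCast] at this
      exact this
  exact hH.of_pow_mem (Int.natAbs_ne_zero.2 hk) this

end LeftOrder

/-- A rational series of length `m` for `G`, together with identifications
`φ i` of the successive quotients `G_{i+1}/G_i` with subgroups of `ℚ`:
`{1} = s 0 ◁ s 1 ◁ ⋯ ◁ s m = G`, each `s i` normal in `G`, each quotient
nontrivial torsion-free abelian of rank one (it embeds in `ℚ` via `φ i`,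
a homomorphism on `s (i+1)` with kernel exactly `s i`). -/
def IsRationalSeries {G : Type*} [Group G]
    (m : ℕ) (s : ℕ → Subgroup G) (φ : ℕ → G → ℚ) : Prop :=
  s 0 = ⊥ ∧ s m = ⊤ ∧
  (∀ i ≤ m, (s i).Normal) ∧
  (∀ i < m, s i < s (i + 1)) ∧
  (∀ i < m, ∀ a ∈ s (i + 1), ∀ b ∈ s (i + 1), φ i (a * b) = φ i a + φ i b) ∧
  (∀ i < m, ∀ g ∈ s (i + 1), (φ i g = 0 ↔ g ∈ s i))

section Series

open LeftOrder

variable {G : Type*} [Group G]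

lemma series_mono {m : ℕ} {s : ℕ → Subgroup G}
    (hstrict : ∀ i < m, s i < s (i + 1)) :
    ∀ {i j : ℕ}, i ≤ j → j ≤ m → s i ≤ s j := by
  intro i j hij hj
  induction j with
  | zero =>
    have : i = 0 := Nat.le_zero.mp hij
    subst this; exact le_rfl
  | succ k ih =>
    rcases Nat.eq_or_lt_of_le hij with rfl | h
    · exact le_rfl
    · exact (ih (by omega) (by omega)).trans (hstrict k (by omega)).le

/-- facts about additive maps into `ℚ` defined on all of `G`. -/
lemma addmap_one {f : G → ℚ} (hadd : ∀ a b : G, f (a * b) = f a + f b) : f 1 = 0 := by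
  have := hadd 1 1
  simp at this; linarith

lemma addmap_inv {f : G → ℚ} (hadd : ∀ a b : G, f (a * b) = f a + f b) (a : G) :
    f a⁻¹ = - f a := by
  have := hadd a a⁻¹
  rw [mul_inv_cancel] at this
  rw [addmap_one hadd] at this
  linarith

lemma addmap_pow {f : G → ℚ} (hadd : ∀ a b : G, f (a * b) = f a + f b) (a : G) :
    ∀ n : ℕ, f (a ^ n) = n * f a := by
  intro n
  induction n with
  | zero => simpa using addmap_one hadd
  | succ k ih => rw [pow_succ, hadd, ih]; push_cast; ring

lemma addmap_zpow {f : G → ℚ} (hadd : ∀ a b : G, f (a * b) = f a + f b) (a : G) :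
    ∀ k : ℤ, f (a ^ k) = k * f a
  | (n : ℕ) => by rw [zpow_natCast, addmap_pow hadd]; push_cast; ring
  | .negSucc n => by
      rw [zpow_negSucc, addmap_inv hadd, addmap_pow hadd]; push_cast; ring

/-- facts about maps additive on a subgroup. -/
lemma sadd_one {B : Subgroup G} {f : G → ℚ}
    (hadd : ∀ a ∈ B, ∀ b ∈ B, f (a * b) = f a + f b) : f 1 = 0 := by
  have := hadd 1 B.one_mem 1 B.one_mem
  simp at this; linarith

lemma sadd_inv {B : Subgroup G} {f : G → ℚ}
    (hadd : ∀ a ∈ B, ∀ b ∈ B, f (a * b) = f a + f b) {a : G} (ha : a ∈ B) :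
    f a⁻¹ = - f a := by
  have := hadd a ha a⁻¹ (B.inv_mem ha)
  rw [mul_inv_cancel, sadd_one hadd] at this
  linarith

lemma sadd_pow {B : Subgroup G} {f : G → ℚ}
    (hadd : ∀ a ∈ B, ∀ b ∈ B, f (a * b) = f a + f b) {a : G} (ha : a ∈ B) :
    ∀ n : ℕ, f (a ^ n) = n * f a := by
  intro n
  induction n with
  | zero => simpa using sadd_one hadd
  | succ k ih =>
    rw [pow_succ, hadd _ (pow_mem ha k) _ ha, ih]; push_cast; ring

lemma sadd_zpow {B : Subgroup G} {f : G → ℚ}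
    (hadd : ∀ a ∈ B, ∀ b ∈ B, f (a * b) = f a + f b) {a : G} (ha : a ∈ B) :
    ∀ k : ℤ, f (a ^ k) = k * f a
  | (n : ℕ) => by rw [zpow_natCast, sadd_pow hadd ha]; push_cast; ring
  | .negSucc n => by
      rw [zpow_negSucc, sadd_inv hadd (pow_mem ha _), sadd_pow hadd ha]
      push_cast; ring

lemma rat_den_mul (q : ℚ) : (q.den : ℚ) * q = q.num := by
  have h : (q.den : ℚ) ≠ 0 := by exact_mod_cast q.den_nz
  rw [mul_comm]
  exact (eq_div_iff h).1 (Rat.num_div_den q).symm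

lemma rat_commensurable {a b : ℚ} (ha : a ≠ 0) (hb : b ≠ 0) :
    ∃ k l : ℤ, k ≠ 0 ∧ l ≠ 0 ∧ (k : ℚ) * a = l * b := by
  refine ⟨b.num * a.den, a.num * b.den, ?_, ?_, ?_⟩
  · exact mul_ne_zero (Rat.num_ne_zero.2 hb) (by exact_mod_cast a.den_nz)
  · exact mul_ne_zero (Rat.num_ne_zero.2 ha) (by exact_mod_cast b.den_nz)
  · push_cast
    rw [mul_assoc, mul_assoc, rat_den_mul, rat_den_mul]
    ring

lemma rat_commensurable_pos {a b : ℚ} (ha : 0 < a) (hb : 0 < b) :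
    ∃ k l : ℕ, 1 ≤ k ∧ 1 ≤ l ∧ (k : ℚ) * a = l * b := by
  refine ⟨b.num.toNat * a.den, a.num.toNat * b.den, ?_, ?_, ?_⟩
  · have h1 : 0 < b.num.toNat := by
      have := Rat.num_pos.2 hb; omega
    have h2 : 0 < a.den := a.pos
    exact Nat.one_le_iff_ne_zero.2 (by positivity)
  · have h1 : 0 < a.num.toNat := by
      have := Rat.num_pos.2 ha; omega
    have h2 : 0 < b.den := b.pos
    exact Nat.one_le_iff_ne_zero.2 (by positivity)
  · push_cast
    rw [mul_assoc, mul_assoc, rat_den_mul, rat_den_mul]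
    norm_cast
    rw [Int.toNat_of_nonneg (Rat.num_pos.2 hb).le, Int.toNat_of_nonneg (Rat.num_pos.2 ha).le]
    ring

end Series

section Core

open LeftOrder

variable {G : Type*} [Group G]

/-- Sign coherence on the top quotient of `s (j+1)`, given order-convexity
of `s j` relative to elements of `s (j+1)`. -/
lemma coherence (o : LeftOrder G) {s : ℕ → Subgroup G} {φ : ℕ → G → ℚ} {j : ℕ}
    (hadd : ∀ a ∈ s (j + 1), ∀ b ∈ s (j + 1), φ j (a * b) = φ j a + φ j b)
    (hker : ∀ g ∈ s (j + 1), (φ j g = 0 ↔ g ∈ s j))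
    (hAconv : ∀ x ∈ s (j + 1), ∀ w ∈ s j, o.le 1 x → o.le x w → x ∈ s j)
    (hne : ∃ x ∈ s (j + 1), x ∉ s j) :
    ∃ δ : ℚ, (δ = 1 ∨ δ = -1) ∧
      ∀ h ∈ s (j + 1), φ j h ≠ 0 → (o.lt 1 h ↔ 0 < δ * φ j h) := by
  have claim : ∀ x ∈ s (j + 1), ∀ y ∈ s (j + 1), o.lt 1 x → o.lt 1 y →
      0 < φ j x → φ j y < 0 → False := by
    intro x hx y hy hpx hpy ha hb
    obtain ⟨k, l, hk, hl, hkl⟩ := rat_commensurable_pos ha (by linarith : (0:ℚ) < -φ j y)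
    set w := x ^ k * y ^ l with hw
    have hwmem : w ∈ s (j + 1) := mul_mem (pow_mem hx k) (pow_mem hy l)
    have hφw : φ j w = 0 := by
      rw [hw, hadd _ (pow_mem hx k) _ (pow_mem hy l), sadd_pow hadd hx, sadd_pow hadd hy]
      have : (l : ℚ) * φ j y = -((k : ℚ) * φ j x) := by rw [hkl]; ring
      linarith
    have hwA : w ∈ s j := (hker w hwmem).1 hφw
    have hxw : o.le x w := by
      refine le_trans (le_pow_self hpx hk) ?_
      have := le_mul_left (o := o) (x ^ k) (le_one_pow hpy l)
      simpa using this
    have : x ∈ s j := hAconv x hx w hwA (le_of_lt hpx) hxw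
    rw [← hker x hx] at this
    linarith
  obtain ⟨x', hx'1, hx'j⟩ := hne
  have hφx' : φ j x' ≠ 0 := fun h0 => hx'j ((hker x' hx'1).1 h0)
  have hx'ne : x' ≠ 1 := by
    rintro rfl; exact hx'j (s j).one_mem
  obtain ⟨x₀, hx₀mem, hx₀pos, hx₀φ⟩ :
      ∃ x₀ ∈ s (j + 1), o.lt 1 x₀ ∧ φ j x₀ ≠ 0 := by
    rcases pos_or_pos_inv (o := o) hx'ne with h | h
    · exact ⟨x', hx'1, h, hφx'⟩
    · refine ⟨x'⁻¹, (s (j+1)).inv_mem hx'1, h, ?_⟩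
      rw [sadd_inv hadd hx'1]; simpa using hφx'
  refine ⟨if 0 < φ j x₀ then 1 else -1, by split <;> simp, ?_⟩
  set δ : ℚ := if 0 < φ j x₀ then 1 else -1 with hδdef
  have hδx₀ : 0 < δ * φ j x₀ := by
    rw [hδdef]; split
    · simpa using ‹0 < φ j x₀›
    · rcases lt_trichotomy (φ j x₀) 0 with h | h | h
      · nlinarith
      · exact absurd h hx₀φ
      · exact absurd h ‹¬ 0 < φ j x₀›
  have hδ1 : δ = 1 ∨ δ = -1 := by rw [hδdef]; split <;> simp
  have claim2 : ∀ h ∈ s (j + 1), φ j h ≠ 0 → o.lt 1 h → 0 < δ * φ j h := by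
    intro h hmem hφ hpos
    rcases lt_trichotomy (δ * φ j h) 0 with hc | hc | hc
    · exfalso
      rcases hδ1 with h1 | h1
      · rw [h1, one_mul] at hδx₀ hc
        exact claim x₀ hx₀mem h hmem hx₀pos hpos hδx₀ hc
      · rw [h1] at hδx₀ hc
        exact claim h hmem x₀ hx₀mem hpos hx₀pos (by linarith) (by linarith)
    · exfalso
      rcases hδ1 with h1 | h1 <;> rw [h1] at hc <;>
        [exact hφ (by linarith); exact hφ (by linarith)]
    · exact hc
  intro h hmem hφ
  constructor
  · exact claim2 h hmem hφ
  · intro hsign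
    have hne1 : h ≠ 1 := by
      rintro rfl
      exact hφ (sadd_one hadd)
    rcases pos_or_pos_inv (o := o) hne1 with hp | hp
    · exact hp
    · exfalso
      have hmem' : h⁻¹ ∈ s (j + 1) := (s (j+1)).inv_mem hmem
      have hφ' : φ j h⁻¹ ≠ 0 := by rw [sadd_inv hadd hmem]; simpa using hφ
      have := claim2 h⁻¹ hmem' hφ' hp
      rw [sadd_inv hadd hmem] at this
      nlinarith

/-- `z` is bounded on both sides by elements of `B`. -/
def Bdd (o : LeftOrder G) (B : Subgroup G) (z : G) : Prop :=
  (∃ b ∈ B, o.le b z) ∧ (∃ b ∈ B, o.le z b)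

lemma Bdd.of_mem {o : LeftOrder G} {B : Subgroup G} {z : G} (hz : z ∈ B) :
    Bdd o B z := ⟨⟨z, hz, o.le_refl z⟩, ⟨z, hz, o.le_refl z⟩⟩

lemma Bdd.inv {o : LeftOrder G} {B : Subgroup G} [hN : B.Normal] {z : G}
    (h : Bdd o B z) : Bdd o B z⁻¹ := by
  obtain ⟨⟨b₁, hb₁, hle₁⟩, ⟨b₂, hb₂, hle₂⟩⟩ := h
  constructor
  · refine ⟨z⁻¹ * b₂⁻¹ * z, by simpa using hN.conj_mem b₂⁻¹ (B.inv_mem hb₂) z⁻¹, ?_⟩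
    rw [o.le_iff_pos]
    have : (z⁻¹ * b₂⁻¹ * z)⁻¹ * z⁻¹ = z⁻¹ * b₂ := by group
    rw [this, ← o.le_iff_pos]
    exact hle₂
  · refine ⟨z⁻¹ * b₁⁻¹ * z, by simpa using hN.conj_mem b₁⁻¹ (B.inv_mem hb₁) z⁻¹, ?_⟩
    rw [o.le_iff_pos]
    have : (z⁻¹)⁻¹ * (z⁻¹ * b₁⁻¹ * z) = b₁⁻¹ * z := by group
    rw [this]
    have := (o.le_iff_pos b₁ z).1 hle₁
    simpa using this
  
lemma Bdd.mul {o : LeftOrder G} {B : Subgroup G} [hN : B.Normal] {z₁ z₂ : G}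
    (h1 : Bdd o B z₁) (h2 : Bdd o B z₂) : Bdd o B (z₁ * z₂) := by
  obtain ⟨⟨b₁, hb₁, hle₁⟩, ⟨b₂, hb₂, hle₂⟩⟩ := h1
  obtain ⟨⟨c₁, hc₁, hlc₁⟩, ⟨c₂, hc₂, hlc₂⟩⟩ := h2
  constructor
  · refine ⟨(z₁ * c₁ * z₁⁻¹) * b₁, mul_mem (hN.conj_mem c₁ hc₁ z₁) hb₁, ?_⟩
    have e1 : o.le ((z₁ * c₁ * z₁⁻¹) * b₁) ((z₁ * c₁ * z₁⁻¹) * z₁) :=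
      le_mul_left _ hle₁
    have e2 : (z₁ * c₁ * z₁⁻¹) * z₁ = z₁ * c₁ := by group
    rw [e2] at e1
    exact le_trans e1 (le_mul_left z₁ hlc₁)
  · refine ⟨(z₁ * c₂ * z₁⁻¹) * b₂, mul_mem (hN.conj_mem c₂ hc₂ z₁) hb₂, ?_⟩
    have e1 : o.le (z₁ * z₂) (z₁ * c₂) := le_mul_left z₁ hlc₂
    have e2 : o.le ((z₁ * c₂ * z₁⁻¹) * z₁) ((z₁ * c₂ * z₁⁻¹) * b₂) :=
      le_mul_left _ hle₂
    have e3 : (z₁ * c₂ * z₁⁻¹) * z₁ = z₁ * c₂ := by group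
    rw [e3] at e2
    exact le_trans e1 e2

lemma Bdd.pow {o : LeftOrder G} {B : Subgroup G} [hN : B.Normal] {z : G}
    (h : Bdd o B z) (n : ℕ) : Bdd o B (z ^ n) := by
  induction n with
  | zero => simpa using Bdd.of_mem (o := o) B.one_mem
  | succ k ih => rw [pow_succ]; exact ih.mul h

lemma Bdd.zpow {o : LeftOrder G} {B : Subgroup G} [hN : B.Normal] {z : G}
    (h : Bdd o B z) (k : ℤ) : Bdd o B (z ^ k) := by
  rcases Int.natAbs_eq k with he | he
  · rw [he, zpow_natCast]; exact h.pow _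
  · rw [he, zpow_neg, zpow_natCast]; exact (h.pow _).inv

lemma Bdd.of_pow {o : LeftOrder G} {B : Subgroup G} {z : G} {n : ℕ}
    (hn : n ≠ 0) (h : Bdd o B (z ^ n)) : Bdd o B z := by
  rcases eq_or_ne z 1 with rfl | hz1
  · exact Bdd.of_mem B.one_mem
  obtain ⟨⟨b₁, hb₁, hle₁⟩, ⟨b₂, hb₂, hle₂⟩⟩ := h
  rcases pos_or_pos_inv (o := o) hz1 with hp | hp
  · exact ⟨⟨1, B.one_mem, le_of_lt hp⟩,
      ⟨b₂, hb₂, le_trans (le_pow_self hp (Nat.one_le_iff_ne_zero.2 hn)) hle₂⟩⟩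
  · have hneg : o.lt z 1 := (o.neg_iff_pos_inv z).2 hp
    exact ⟨⟨b₁, hb₁, le_trans hle₁ (pow_le_self hneg (Nat.one_le_iff_ne_zero.2 hn))⟩,
      ⟨1, B.one_mem, le_of_lt hneg⟩⟩

lemma Bdd.of_zpow {o : LeftOrder G} {B : Subgroup G} [hN : B.Normal] {z : G} {k : ℤ}
    (hk : k ≠ 0) (h : Bdd o B (z ^ k)) : Bdd o B z := by
  have h' : Bdd o B (z ^ k.natAbs) := by
    rcases Int.natAbs_eq k with he | he
    · rw [he, zpow_natCast] at h; exact h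
    · rw [he, zpow_neg, zpow_natCast] at h
      simpa using h.inv
  exact h'.of_pow (Int.natAbs_ne_zero.2 hk)

end Core

section NegAction

open LeftOrder

variable {G : Type*} [Group G]

lemma notin_of_neg_action {s : ℕ → Subgroup G} {φ : ℕ → G → ℚ} {j : ℕ}
    (hadd : ∀ a ∈ s (j + 1), ∀ b ∈ s (j + 1), φ j (a * b) = φ j a + φ j b)
    (hne : ∃ x ∈ s (j + 1), φ j x ≠ 0)
    {g : G} {q : ℚ} (hq : q < 0)
    (hact : ∀ h ∈ s (j + 1), φ j (g * h * g⁻¹) = q * φ j h) :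
    g ∉ s (j + 1) := by
  intro hgB
  obtain ⟨x₀, hx₀, hφx₀⟩ := hne
  have h1 : φ j (g * x₀ * g⁻¹) = φ j x₀ := by
    rw [hadd _ (mul_mem hgB hx₀) _ ((s (j+1)).inv_mem hgB),
        hadd _ hgB _ hx₀, sadd_inv hadd hgB]
    ring
  have h2 := hact x₀ hx₀
  rw [h1] at h2
  have : (q - 1) * φ j x₀ = 0 := by linarith
  rcases mul_eq_zero.1 this with h | h
  · linarith
  · exact hφx₀ h

lemma neg_action_unbdd_aux (o : LeftOrder G) {s : ℕ → Subgroup G} {φ : ℕ → G → ℚ} {j : ℕ}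
    (hadd : ∀ a ∈ s (j + 1), ∀ b ∈ s (j + 1), φ j (a * b) = φ j a + φ j b)
    (hker : ∀ g ∈ s (j + 1), (φ j g = 0 ↔ g ∈ s j))
    (hnorm : (s (j + 1)).Normal)
    {δ : ℚ} (hδ1 : δ = 1 ∨ δ = -1)
    (hcoh : ∀ h ∈ s (j + 1), φ j h ≠ 0 → (o.lt 1 h ↔ 0 < δ * φ j h))
    (hne : ∃ x ∈ s (j + 1), φ j x ≠ 0)
    {g : G} {q : ℚ} (hq : q < 0)
    (hact : ∀ h ∈ s (j + 1), φ j (g * h * g⁻¹) = q * φ j h)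
    (hg : o.lt 1 g) :
    ¬ Bdd o (s (j + 1)) g := by
  rintro ⟨-, ⟨b₂, hb₂, hgb₂⟩⟩
  have hδ0 : δ ≠ 0 := by rcases hδ1 with h | h <;> rw [h] <;> norm_num
  have hgB : g ∉ s (j + 1) := notin_of_neg_action hadd hne hq hact
  have hltg : o.lt g b₂ := by
    rcases hgb₂ with h | rfl
    · exact h
    · exact absurd hb₂ hgB
  -- a positive-φ element h₀
  obtain ⟨h₀, hh₀mem, hh₀sign⟩ : ∃ h₀ ∈ s (j + 1), 0 < δ * φ j h₀ := by
    obtain ⟨x₀, hx₀, hφx₀⟩ := hne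
    rcases lt_trichotomy (δ * φ j x₀) 0 with h | h | h
    · refine ⟨x₀⁻¹, (s (j+1)).inv_mem hx₀, ?_⟩
      rw [sadd_inv hadd hx₀]; nlinarith
    · exact absurd h (mul_ne_zero hδ0 hφx₀)
    · exact ⟨x₀, hx₀, h⟩
  have hφh₀ : φ j h₀ ≠ 0 := fun h0 => by rw [h0, mul_zero] at hh₀sign; linarith
  have hposh₀ : o.lt 1 h₀ := (hcoh h₀ hh₀mem hφh₀).2 hh₀sign
  -- choose N with δ * φ (b₂ * h₀ ^ N) > 0
  obtain ⟨N, hN⟩ : ∃ N : ℕ, 0 < δ * φ j b₂ + (N : ℚ) * (δ * φ j h₀) := by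
    obtain ⟨N, hN⟩ := exists_nat_gt ((-(δ * φ j b₂)) / (δ * φ j h₀))
    refine ⟨N, ?_⟩
    have := (div_lt_iff₀ hh₀sign).1 hN
    linarith
  set h : G := b₂ * h₀ ^ N with hdef
  have hmem : h ∈ s (j + 1) := mul_mem hb₂ (pow_mem hh₀mem N)
  have hφh : φ j h = φ j b₂ + (N : ℚ) * φ j h₀ := by
    rw [hdef, hadd _ hb₂ _ (pow_mem hh₀mem N), sadd_pow hadd hh₀mem]
  have hδφh : 0 < δ * φ j h := by rw [hφh]; ring_nf; ring_nf at hN; linarith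
  have hφhne : φ j h ≠ 0 := fun h0 => by rw [h0, mul_zero] at hδφh; linarith
  have hlth : o.lt g h := by
    refine lt_of_lt_of_le hltg ?_
    have := le_mul_left (o := o) b₂ (le_one_pow hposh₀ N)
    simpa using this
  have p₁ : o.lt 1 (g⁻¹ * h) := (o.lt_iff_pos g h).1 hlth
  -- the conjugate g h g⁻¹ is negative
  have hconjmem : g * h * g⁻¹ ∈ s (j + 1) := hnorm.conj_mem h hmem g
  have hφconj : φ j (g * h * g⁻¹) = q * φ j h := hact h hmem
  have hφconjne : φ j (g * h * g⁻¹) ≠ 0 := by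
    rw [hφconj]; exact mul_ne_zero (ne_of_lt hq) hφhne
  have hconjne1 : g * h * g⁻¹ ≠ 1 := by
    intro h0
    rw [h0] at hφconjne
    exact hφconjne (sadd_one hadd)
  have hnotpos : ¬ o.lt 1 (g * h * g⁻¹) := by
    rw [hcoh _ hconjmem hφconjne, hφconj]
    intro hcontra
    nlinarith
  have p₂ : o.lt 1 ((g * h * g⁻¹)⁻¹) := by
    rcases pos_or_pos_inv (o := o) hconjne1 with hcontra | hok
    · exact absurd hcontra hnotpos
    · exact hok
  -- the commutator-type element k₀ is positive
  have hk₀pos : o.lt 1 (g⁻¹ * h * g * h⁻¹) := by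
    have := pos_mul p₁ (pos_mul p₂ hg)
    have e : (g⁻¹ * h) * ((g * h * g⁻¹)⁻¹ * g) = g⁻¹ * h * g * h⁻¹ := by group
    rwa [← e]
  -- but its φ-value has the wrong sign
  have hinvmem : g⁻¹ * h * g ∈ s (j + 1) := by
    have := hnorm.conj_mem h hmem g⁻¹
    simpa using this
  have hφinv : φ j (g⁻¹ * h * g) = q⁻¹ * φ j h := by
    have h1 := hact (g⁻¹ * h * g) hinvmem
    have e : g * (g⁻¹ * h * g) * g⁻¹ = h := by group
    rw [e] at h1
    rw [h1, inv_mul_cancel_left₀ (ne_of_lt hq)]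
  have hk₀mem : g⁻¹ * h * g * h⁻¹ ∈ s (j + 1) :=
    mul_mem hinvmem ((s (j+1)).inv_mem hmem)
  have hφk₀ : φ j (g⁻¹ * h * g * h⁻¹) = (q⁻¹ - 1) * φ j h := by
    rw [hadd _ hinvmem _ ((s (j+1)).inv_mem hmem), hφinv, sadd_inv hadd hmem]
    ring
  have hqinv : q⁻¹ < 0 := inv_neg''.2 hq
  have hφk₀ne : φ j (g⁻¹ * h * g * h⁻¹) ≠ 0 := by
    rw [hφk₀]
    exact mul_ne_zero (by linarith) hφhne
  have := (hcoh _ hk₀mem hφk₀ne).1 hk₀pos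
  rw [hφk₀] at this
  nlinarith

lemma neg_action_unbdd (o : LeftOrder G) {s : ℕ → Subgroup G} {φ : ℕ → G → ℚ} {j : ℕ}
    (hadd : ∀ a ∈ s (j + 1), ∀ b ∈ s (j + 1), φ j (a * b) = φ j a + φ j b)
    (hker : ∀ g ∈ s (j + 1), (φ j g = 0 ↔ g ∈ s j))
    (hnorm : (s (j + 1)).Normal)
    {δ : ℚ} (hδ1 : δ = 1 ∨ δ = -1)
    (hcoh : ∀ h ∈ s (j + 1), φ j h ≠ 0 → (o.lt 1 h ↔ 0 < δ * φ j h))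
    (hne : ∃ x ∈ s (j + 1), φ j x ≠ 0)
    {g : G} {q : ℚ} (hq : q < 0)
    (hact : ∀ h ∈ s (j + 1), φ j (g * h * g⁻¹) = q * φ j h) :
    ¬ Bdd o (s (j + 1)) g := by
  intro hBdd
  have hgB : g ∉ s (j + 1) := notin_of_neg_action hadd hne hq hact
  have hg1 : g ≠ 1 := by rintro rfl; exact hgB (s (j+1)).one_mem
  rcases pos_or_pos_inv (o := o) hg1 with hp | hp
  · exact neg_action_unbdd_aux o hadd hker hnorm hδ1 hcoh hne hq hact hp hBdd
  · have hact' : ∀ h ∈ s (j + 1), φ j (g⁻¹ * h * (g⁻¹)⁻¹) = q⁻¹ * φ j h := by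
      intro h hmem
      have hmem' : g⁻¹ * h * g ∈ s (j + 1) := by
        simpa using hnorm.conj_mem h hmem g⁻¹
      have h1 := hact (g⁻¹ * h * g) hmem'
      have e : g * (g⁻¹ * h * g) * g⁻¹ = h := by group
      rw [e] at h1
      rw [inv_inv, h1, inv_mul_cancel_left₀ (ne_of_lt hq)]
    have hBdd' : Bdd o (s (j + 1)) g⁻¹ := by
      have : (s (j+1)).Normal := hnorm
      exact hBdd.inv
    exact neg_action_unbdd_aux o hadd hker hnorm hδ1 hcoh hne (inv_neg''.2 hq) hact' hp hBdd'

end NegAction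


section ConvAll

open LeftOrder

variable {G : Type*} [Group G]

lemma restrict_le_iff (o : LeftOrder G) (B : Subgroup G) (a b : B) :
    (o.restrict B).le a b ↔ o.le (a : G) (b : G) := by
  constructor
  · rintro (h | h)
    · exact Or.inl h
    · exact Or.inr (by rw [h])
  · rintro (h | h)
    · exact Or.inl h
    · exact Or.inr (Subtype.coe_injective h)

lemma convex_step (o : LeftOrder G) {s : ℕ → Subgroup G} {φ : ℕ → G → ℚ} {j : ℕ}
    (hadd : ∀ a ∈ s (j + 1), ∀ b ∈ s (j + 1), φ j (a * b) = φ j a + φ j b)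
    (hker : ∀ g ∈ s (j + 1), (φ j g = 0 ↔ g ∈ s j))
    (hnorm : (s (j + 1)).Normal)
    (haddtop : ∀ a b : G, φ (j + 1) (a * b) = φ (j + 1) a + φ (j + 1) b)
    (hkertop : ∀ g : G, (φ (j + 1) g = 0 ↔ g ∈ s (j + 1)))
    {δ : ℚ} (hδ1 : δ = 1 ∨ δ = -1)
    (hcoh : ∀ h ∈ s (j + 1), φ j h ≠ 0 → (o.lt 1 h ↔ 0 < δ * φ j h))
    (hne : ∃ x ∈ s (j + 1), φ j x ≠ 0)
    {g₀ : G} {q : ℚ} (hq : q < 0)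
    (hact : ∀ h ∈ s (j + 1), φ j (g₀ * h * g₀⁻¹) = q * φ j h) :
    o.IsConvex (s (j + 1)) := by
  intro z h₁ h₂ m1 m2 l1 l2
  by_contra hz
  have hBz : Bdd o (s (j + 1)) z := ⟨⟨h₁, m1, l1⟩, ⟨h₂, m2, l2⟩⟩
  have hφz : φ (j + 1) z ≠ 0 := fun h0 => hz ((hkertop z).1 h0)
  have hg₀B : g₀ ∉ s (j + 1) := notin_of_neg_action hadd hne hq hact
  have hφg₀ : φ (j + 1) g₀ ≠ 0 := fun h0 => hg₀B ((hkertop g₀).1 h0)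
  obtain ⟨k, l, hk, hl, hkl⟩ := rat_commensurable hφz hφg₀
  have hwmem : z ^ k * g₀ ^ (-l) ∈ s (j + 1) := by
    apply (hkertop _).1
    rw [haddtop, addmap_zpow haddtop, addmap_zpow haddtop]
    push_cast
    linarith [hkl]
  have hgl : g₀ ^ l = (z ^ k * g₀ ^ (-l))⁻¹ * z ^ k := by group
  have hBgl : Bdd o (s (j + 1)) (g₀ ^ l) := by
    rw [hgl]
    exact (Bdd.of_mem ((s (j + 1)).inv_mem hwmem)).mul (hBz.zpow k)
  exact neg_action_unbdd o hadd hker hnorm hδ1 hcoh hne hq hact (hBgl.of_zpow hl)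

theorem conv_all : ∀ (m : ℕ) {G : Type*} [Group G] (s : ℕ → Subgroup G) (φ : ℕ → G → ℚ),
    IsRationalSeries m s φ →
    (∀ j, 1 ≤ j → j < m → ∃ g ∈ s (j + 1), ∃ q : ℚ, q < 0 ∧
        ∀ h ∈ s j, φ (j - 1) (g * h * g⁻¹) = q * φ (j - 1) h) →
    ∀ (o : LeftOrder G) (i : ℕ), i ≤ m → o.IsConvex (s i) := by
  intro m
  induction m with
  | zero =>
    intro G _ s φ hrs _ o i hi
    have : i = 0 := Nat.le_zero.mp hi
    subst this
    rw [hrs.1]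
    exact o.isConvex_bot
  | succ n ih =>
    intro G _ s φ hrs htar o i hi
    obtain ⟨hbot, htop, hnorm, hstrict, hadd, hker⟩ := hrs
    rcases Nat.lt_or_ge i (n + 1) with hilt | hige
    swap
    · have : i = n + 1 := le_antisymm hi hige
      subst this
      rw [htop]
      exact o.isConvex_top
    have hin : i ≤ n := by omega
    rcases Nat.eq_zero_or_pos n with rfl | hn
    · have : i = 0 := Nat.le_zero.mp hin
      subst this
      rw [hbot]
      exact o.isConvex_bot
    obtain ⟨k, rfl⟩ : ∃ k, n = k + 1 := ⟨n - 1, (Nat.succ_pred_eq_of_pos hn).symm⟩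
    set B := s (k + 1) with hBdef
    have hmono : ∀ {a b : ℕ}, a ≤ b → b ≤ k + 2 → s a ≤ s b :=
      fun h h' => series_mono hstrict h h'
    -- the restricted series in B
    set s' : ℕ → Subgroup B := fun i => (s i).comap B.subtype with hs'def
    set φ' : ℕ → B → ℚ := fun i x => φ i (x : G) with hφ'def
    have hs'mem : ∀ (i : ℕ) (x : B), x ∈ s' i ↔ (x : G) ∈ s i := by
      intro i x; exact Iff.rfl
    have hrs' : IsRationalSeries (k + 1) s' φ' := by
      refine ⟨?_, ?_, ?_, ?_, ?_, ?_⟩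
      · ext x
        rw [hs'mem 0 x, hbot]
        simp only [Subgroup.mem_bot, OneMemClass.coe_eq_one]
      · ext x
        rw [hs'mem (k+1) x]
        simpa using x.2
      · intro i hi'
        exact (hnorm i (by omega)).comap B.subtype
      · intro i hi'
        have hstep := hstrict i (by omega)
        obtain ⟨x, hx2, hx1⟩ := SetLike.exists_of_lt hstep
        have hxB : x ∈ B := hmono (by omega) (by omega) hx2
        refine lt_of_le_of_ne (Subgroup.comap_mono hstep.le) ?_
        intro heq
        have : (⟨x, hxB⟩ : B) ∈ s' (i + 1) := (hs'mem _ _).2 hx2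
        rw [← heq] at this
        exact hx1 ((hs'mem _ _).1 this)
      · intro i hi' a ha b hb
        have := hadd i (by omega) (a : G) ((hs'mem _ _).1 ha) (b : G) ((hs'mem _ _).1 hb)
        simpa [hφ'def] using this
      · intro i hi' g hg
        have := hker i (by omega) (g : G) ((hs'mem _ _).1 hg)
        simpa [hφ'def, hs'mem] using this
    have htar' : ∀ j, 1 ≤ j → j < k + 1 → ∃ g ∈ s' (j + 1), ∃ q : ℚ, q < 0 ∧
        ∀ h ∈ s' j, φ' (j - 1) (g * h * g⁻¹) = q * φ' (j - 1) h := by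
      intro j hj1 hjk
      obtain ⟨g, hgmem, q, hq, hact⟩ := htar j hj1 (by omega)
      have hgB : g ∈ B := hmono (by omega) (by omega) hgmem
      refine ⟨⟨g, hgB⟩, (hs'mem _ _).2 hgmem, q, hq, ?_⟩
      intro h hh
      have := hact (h : G) ((hs'mem _ _).1 hh)
      simpa [hφ'def] using this
    have hconv' := ih s' φ' hrs' htar' (o.restrict B)
    -- coherence at the top level of B
    have hADD := hadd k (by omega)
    have hKER := hker k (by omega)
    have hAconv : ∀ x ∈ s (k + 1), ∀ w ∈ s k, o.le 1 x → o.le x w → x ∈ s k := by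
      intro x hx w hw hl1 hl2
      have hwB : w ∈ B := hmono (by omega) (by omega) hw
      have := hconv' k (by omega) ⟨x, hx⟩ ⟨1, B.one_mem⟩ ⟨w, hwB⟩
        ((hs'mem _ _).2 (s k).one_mem) ((hs'mem _ _).2 hw)
        ((restrict_le_iff o B _ _).2 (by simpa using hl1))
        ((restrict_le_iff o B _ _).2 hl2)
      exact (hs'mem _ _).1 this
    have hneB : ∃ x ∈ s (k + 1), x ∉ s k := SetLike.exists_of_lt (hstrict k (by omega))
    obtain ⟨δ, hδ1, hcoh⟩ := coherence o hADD hKER hAconv hneB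
    have hne' : ∃ x ∈ s (k + 1), φ k x ≠ 0 := by
      obtain ⟨x, hx2, hx1⟩ := hneB
      exact ⟨x, hx2, fun h0 => hx1 ((hKER x hx2).1 h0)⟩
    obtain ⟨g₀, hg₀mem, q, hq, hact⟩ := htar (k + 1) (by omega) (by omega)
    have hact' : ∀ h ∈ s (k + 1), φ k (g₀ * h * g₀⁻¹) = q * φ k h := by
      simpa using hact
    have haddtop : ∀ a b : G, φ (k + 1) (a * b) = φ (k + 1) a + φ (k + 1) b := by
      intro a b
      exact hadd (k + 1) (by omega) a (by rw [htop]; trivial) b (by rw [htop]; trivial)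
    have hkertop : ∀ g : G, (φ (k + 1) g = 0 ↔ g ∈ s (k + 1)) :=
      fun g => hker (k + 1) (by omega) g (by rw [htop]; trivial)
    have hBconv : o.IsConvex (s (k + 1)) :=
      convex_step o hADD hKER (hnorm (k + 1) (by omega)) haddtop hkertop hδ1 hcoh hne' hq hact'
    -- transfer convexity of s i from the restricted order
    intro g h₁ h₂ m1 m2 l1 l2
    have hsiB : s i ≤ B := hmono hin (by omega)
    have hgB : g ∈ B := hBconv g h₁ h₂ (hsiB m1) (hsiB m2) l1 l2
    have := hconv' i hin ⟨g, hgB⟩ ⟨h₁, hsiB m1⟩ ⟨h₂, hsiB m2⟩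
      ((hs'mem _ _).2 m1) ((hs'mem _ _).2 m2)
      ((restrict_le_iff o B _ _).2 l1) ((restrict_le_iff o B _ _).2 l2)
    exact (hs'mem _ _).1 this

end ConvAll

section Levels

open LeftOrder

variable {G : Type*} [Group G]

lemma level_exists {m : ℕ} {s : ℕ → Subgroup G}
    (hbot : s 0 = ⊥) (htop : s m = ⊤)
    {g : G} (hg : g ≠ 1) : ∃ j, j < m ∧ g ∈ s (j + 1) ∧ g ∉ s j := by
  classical
  rcases Nat.eq_zero_or_pos m with rfl | hm
  · exfalso
    have : g ∈ s 0 := by rw [htop]; trivial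
    rw [hbot] at this
    exact hg this
  obtain ⟨t, rfl⟩ : ∃ t, m = t + 1 := ⟨m - 1, (Nat.succ_pred_eq_of_pos hm).symm⟩
  have hex : ∃ j, g ∈ s (j + 1) := ⟨t, by rw [htop]; trivial⟩
  set j₀ := Nat.find hex with hj₀
  have hmem : g ∈ s (j₀ + 1) := Nat.find_spec hex
  have hj₀le : j₀ ≤ t := Nat.find_min' hex (by rw [htop]; trivial)
  refine ⟨j₀, by omega, hmem, ?_⟩
  rcases Nat.eq_zero_or_pos j₀ with h0 | hpos
  · rw [h0, hbot]
    simpa using hg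
  · intro hmem'
    have := Nat.find_min hex (m := j₀ - 1) (by omega)
    apply this
    have : j₀ - 1 + 1 = j₀ := by omega
    rw [this]
    exact hmem'

lemma level_unique {m : ℕ} {s : ℕ → Subgroup G}
    (hstrict : ∀ i < m, s i < s (i + 1))
    {g : G} {j j' : ℕ} (hj : j < m) (hj' : j' < m)
    (h1 : g ∈ s (j + 1)) (h2 : g ∉ s j)
    (h1' : g ∈ s (j' + 1)) (h2' : g ∉ s j') : j = j' := by
  by_contra hne
  rcases Nat.lt_or_ge j j' with h | h
  · exact h2' (series_mono hstrict (by omega : j + 1 ≤ j') (by omega) h1)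
  · have : j' < j := by omega
    exact h2 (series_mono hstrict (by omega : j' + 1 ≤ j) (by omega) h1')

/-- positivity in the lexicographic order determined by a sign vector `ε`. -/
def lexPos {G : Type*} [Group G] (s : ℕ → Subgroup G) (φ : ℕ → G → ℚ) (m : ℕ)
    (ε : ℕ → Bool) (g : G) : Prop :=
  ∃ j, j < m ∧ g ∈ s (j + 1) ∧ g ∉ s j ∧
    0 < (if ε j then (1 : ℚ) else -1) * φ j g

lemma lexPos_mul {m : ℕ} {s : ℕ → Subgroup G} {φ : ℕ → G → ℚ}
    (hrs : IsRationalSeries m s φ) (ε : ℕ → Bool) {g h : G}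
    (hg : lexPos s φ m ε g) (hh : lexPos s φ m ε h) : lexPos s φ m ε (g * h) := by
  obtain ⟨-, -, -, hstrict, hadd, hker⟩ := hrs
  obtain ⟨j, hjm, hg1, hg2, hg3⟩ := hg
  obtain ⟨k, hkm, hh1, hh2, hh3⟩ := hh
  rcases lt_trichotomy j k with hlt | rfl | hlt
  · -- level of g * h is k
    have hgk : g ∈ s k := series_mono hstrict (by omega : j + 1 ≤ k) (by omega) hg1
    have hgk1 : g ∈ s (k + 1) := series_mono hstrict (by omega : j + 1 ≤ k + 1) (by omega) hg1
    have hφg : φ k g = 0 := (hker k hkm g hgk1).2 hgk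
    have hφ : φ k (g * h) = φ k h := by
      rw [hadd k hkm g hgk1 h hh1, hφg]; ring
    have hφne : φ k h ≠ 0 := fun h0 => hh2 ((hker k hkm h hh1).1 h0)
    refine ⟨k, hkm, mul_mem hgk1 hh1, ?_, by rw [hφ]; exact hh3⟩
    intro hmem
    exact hh2 (by
      have : φ k (g * h) = 0 := (hker k hkm _ (mul_mem hgk1 hh1)).2 hmem
      rw [hφ] at this
      exact absurd this hφne)
  · -- same level
    have hφ : φ j (g * h) = φ j g + φ j h := hadd j hjm g hg1 h hh1
    have hsign : 0 < (if ε j then (1:ℚ) else -1) * φ j (g * h) := by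
      rw [hφ, mul_add]; linarith
    refine ⟨j, hjm, mul_mem hg1 hh1, ?_, hsign⟩
    intro hmem
    have h0 : φ j (g * h) = 0 := (hker j hjm _ (mul_mem hg1 hh1)).2 hmem
    rw [h0, mul_zero] at hsign
    exact lt_irrefl _ hsign
  · -- level of g * h is j
    have hhj : h ∈ s j := series_mono hstrict (by omega : k + 1 ≤ j) (by omega) hh1
    have hhj1 : h ∈ s (j + 1) := series_mono hstrict (by omega : k + 1 ≤ j + 1) (by omega) hh1
    have hφh : φ j h = 0 := (hker j hjm h hhj1).2 hhj
    have hφ : φ j (g * h) = φ j g := by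
      rw [hadd j hjm g hg1 h hhj1, hφh]; ring
    have hφne : φ j g ≠ 0 := fun h0 => hg2 ((hker j hjm g hg1).1 h0)
    refine ⟨j, hjm, mul_mem hg1 hhj1, ?_, by rw [hφ]; exact hg3⟩
    intro hmem
    have : φ j (g * h) = 0 := (hker j hjm _ (mul_mem hg1 hhj1)).2 hmem
    rw [hφ] at this
    exact hφne this

lemma lexPos_not_one {m : ℕ} {s : ℕ → Subgroup G} {φ : ℕ → G → ℚ}
    (ε : ℕ → Bool) : ¬ lexPos s φ m ε 1 := by
  rintro ⟨j, -, -, h2, -⟩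
  exact h2 (s j).one_mem

lemma lexPos_inv_of_neg {m : ℕ} {s : ℕ → Subgroup G} {φ : ℕ → G → ℚ}
    (hrs : IsRationalSeries m s φ) (ε : ℕ → Bool) {g : G} (hg1 : g ≠ 1)
    (hg : ¬ lexPos s φ m ε g) : lexPos s φ m ε g⁻¹ := by
  obtain ⟨hbot, htop, -, hstrict, hadd, hker⟩ := hrs
  obtain ⟨j, hjm, h1, h2⟩ := level_exists hbot htop hg1
  have hφne : φ j g ≠ 0 := fun h0 => h2 ((hker j hjm g h1).1 h0)
  have hinv1 : g⁻¹ ∈ s (j + 1) := (s (j + 1)).inv_mem h1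
  have hinv2 : g⁻¹ ∉ s j := fun hm => h2 (by simpa using (s j).inv_mem hm)
  have hφinv : φ j g⁻¹ = - φ j g := sadd_inv (hadd j hjm) h1
  rcases lt_trichotomy ((if ε j then (1:ℚ) else -1) * φ j g) 0 with hs | hs | hs
  · refine ⟨j, hjm, hinv1, hinv2, ?_⟩
    rw [hφinv]
    nlinarith
  · exfalso
    have : (if ε j then (1:ℚ) else -1) ≠ 0 := by split <;> norm_num
    exact hφne (by
      rcases mul_eq_zero.1 hs with h | h
      · exact absurd h this
      · exact h)
  · exact absurd ⟨j, hjm, h1, h2, hs⟩ hg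

/-- The lexicographic left order attached to a sign vector. -/
def mkLex {m : ℕ} {s : ℕ → Subgroup G} {φ : ℕ → G → ℚ}
    (hrs : IsRationalSeries m s φ) (ε : ℕ → Bool) : LeftOrder G where
  lt a b := lexPos s φ m ε (a⁻¹ * b)
  irrefl a := by
    intro h
    rw [inv_mul_cancel] at h
    exact lexPos_not_one ε h
  trans a b c hab hbc := by
    have := lexPos_mul hrs ε hab hbc
    have e : (a⁻¹ * b) * (b⁻¹ * c) = a⁻¹ * c := by group
    rwa [e] at this
  total a b := by
    by_cases hab : a = b
    · exact Or.inr (Or.inl hab)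
    have hne : a⁻¹ * b ≠ 1 := by
      intro h
      exact hab (by rw [← mul_left_cancel_iff (a := a⁻¹), h, inv_mul_cancel])
    by_cases hp : lexPos s φ m ε (a⁻¹ * b)
    · exact Or.inl hp
    · right; right
      have := lexPos_inv_of_neg hrs ε hne hp
      have e : (a⁻¹ * b)⁻¹ = b⁻¹ * a := by group
      rwa [e] at this
  mul_left a b c h := by
    have e : (c * a)⁻¹ * (c * b) = a⁻¹ * b := by group
    show lexPos s φ m ε ((c * a)⁻¹ * (c * b))
    rwa [e]

end Levels

/-- A Tararin series: a rational series such that for every `2 ≤ i ≤ m` some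
element of `G_i = s i` acts by conjugation on `G_{i-1}/G_{i-2}` as
multiplication by a negative rational number (in the indexing below,
`j + 1` plays the role of `i`, so `1 ≤ j ≤ m - 1`). -/
def IsTararinSeries {G : Type*} [Group G] (m : ℕ) (s : ℕ → Subgroup G) : Prop :=
  ∃ φ : ℕ → G → ℚ, IsRationalSeries m s φ ∧
    ∀ j, 1 ≤ j → j < m →
      ∃ g ∈ s (j + 1), ∃ q : ℚ, q < 0 ∧
        ∀ h ∈ s j, φ (j - 1) (g * h * g⁻¹) = q * φ (j - 1) h

open LeftOrder in
/-- A Tararin group `G` with rational series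
`{1} = G₀ ◁ ⋯ ◁ G_m = G` admits exactly `2 ^ m` left-orderings, all its
left-orderings are Conradian, and in every left-ordering the convex subgroups
are exactly `G₀, …, G_m`. -/
theorem tararin_group_orderings
    {G : Type*} [Group G]
    (hlo : Nonempty (LeftOrder G))
    (m : ℕ) (s : ℕ → Subgroup G) (hts : IsTararinSeries m s) :
    Nat.card (LeftOrder G) = 2 ^ m ∧
    (∀ o : LeftOrder G, o.IsConradian) ∧
    (∀ (o : LeftOrder G) (H : Subgroup G), o.IsConvex H ↔ ∃ i ≤ m, H = s i) := by
    classical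
  obtain ⟨φ, hrs, htar⟩ := hts
  have hconv := conv_all m s φ hrs htar
  obtain ⟨hbot, htop, hnorm, hstrict, hadd, hker⟩ := id hrs
  -- sign data for each left order and level
  have hδex : ∀ (o : LeftOrder G) (j : ℕ), ∃ δ : ℚ, (δ = 1 ∨ δ = -1) ∧
      (j < m → ∀ h ∈ s (j + 1), φ j h ≠ 0 → (o.lt 1 h ↔ 0 < δ * φ j h)) := by
    intro o j
    by_cases hj : j < m
    · obtain ⟨δ, h1, h2⟩ := coherence o (hadd j hj) (hker j hj)
        (fun x hx w hw l1 l2 => hconv o j hj.le x 1 w (s j).one_mem hw l1 l2)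
        (SetLike.exists_of_lt (hstrict j hj))
      exact ⟨δ, h1, fun _ => h2⟩
    · exact ⟨1, Or.inl rfl, fun h => absurd h hj⟩
  choose δf hδf1 hδf2 using hδex
  have hSD : ∀ (o : LeftOrder G) (j : ℕ), j < m → ∀ g ∈ s (j + 1), g ∉ s j →
      (o.lt 1 g ↔ 0 < δf o j * φ j g) := by
    intro o j hj g h1 h2
    exact hδf2 o j hj g h1 (fun h0 => h2 ((hker j hj g h1).1 h0))
  have hδne : ∀ (o : LeftOrder G) (j : ℕ), δf o j ≠ 0 := by
    intro o j
    rcases hδf1 o j with h | h <;> rw [h] <;> norm_num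
  -- characterization of each order by signs
  have hsgn : ∀ (o : LeftOrder G) (j : ℕ),
      (if (decide (δf o j = 1) : Bool) then (1 : ℚ) else -1) = δf o j := by
    intro o j
    rcases hδf1 o j with h | h <;> norm_num [h]
  have hchar : ∀ (o : LeftOrder G) (a b : G),
      o.lt a b ↔ lexPos s φ m (fun j => decide (δf o j = 1)) (a⁻¹ * b) := by
    intro o a b
    constructor
    · intro hab
      have hpos : o.lt 1 (a⁻¹ * b) := (o.lt_iff_pos a b).1 hab
      have hne : a⁻¹ * b ≠ 1 := by
        intro h
        rw [h] at hpos
        exact o.irrefl 1 hpos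
      obtain ⟨j, hjm, h1, h2⟩ := level_exists hbot htop hne
      refine ⟨j, hjm, h1, h2, ?_⟩
      rw [hsgn o j]
      exact (hSD o j hjm _ h1 h2).1 hpos
    · rintro ⟨j, hjm, h1, h2, h3⟩
      rw [hsgn o j] at h3
      exact (o.lt_iff_pos a b).2 ((hSD o j hjm _ h1 h2).2 h3)
  have hlexcongr : ∀ (ε ε' : ℕ → Bool), (∀ j, j < m → ε j = ε' j) →
      ∀ g, lexPos s φ m ε g → lexPos s φ m ε' g := by
    rintro ε ε' hεε g ⟨j, hjm, h1, h2, h3⟩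
    exact ⟨j, hjm, h1, h2, by rw [← hεε j hjm]; exact h3⟩
  -- witnesses
  have hwex : ∀ j, j < m → ∃ x, x ∈ s (j + 1) ∧ x ∉ s j ∧ 0 < φ j x := by
    intro j hj
    obtain ⟨x, hx1, hx2⟩ := SetLike.exists_of_lt (hstrict j hj)
    have hφ : φ j x ≠ 0 := fun h0 => hx2 ((hker j hj x hx1).1 h0)
    rcases lt_trichotomy (φ j x) 0 with h | h | h
    · refine ⟨x⁻¹, (s (j + 1)).inv_mem hx1,
        fun hm => hx2 (by simpa using (s j).inv_mem hm), ?_⟩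
      rw [sadd_inv (hadd j hj) hx1]; linarith
    · exact absurd h hφ
    · exact ⟨x, hx1, hx2, h⟩
  choose w hw1 hw2 hw3 using hwex
  -- the counting bijection
  set F : LeftOrder G → (Fin m → Bool) :=
    fun o i => @decide (o.lt 1 (w i.1 i.2)) (Classical.propDecidable _) with hFdef
  have hFinj : Function.Injective F := by
    intro o₁ o₂ hF
    have hδeq : ∀ j, j < m → δf o₁ j = δf o₂ j := by
      intro j hj
      have hb := congrFun hF ⟨j, hj⟩
      rw [hFdef] at hb
      have hiff : o₁.lt 1 (w j hj) ↔ o₂.lt 1 (w j hj) := by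
        exact decide_eq_decide.1 hb
      have h₁ := hSD o₁ j hj _ (hw1 j hj) (hw2 j hj)
      have h₂ := hSD o₂ j hj _ (hw1 j hj) (hw2 j hj)
      have hw3' := hw3 j hj
      rcases hδf1 o₁ j with d1 | d1 <;> rcases hδf1 o₂ j with d2 | d2
      · rw [d1, d2]
      · exfalso
        have hp1 : o₁.lt 1 (w j hj) := h₁.2 (by rw [d1]; linarith)
        have hp2 := h₂.1 (hiff.1 hp1)
        rw [d2] at hp2; linarith
      · exfalso
        have hp2 : o₂.lt 1 (w j hj) := h₂.2 (by rw [d2]; linarith)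
        have hp1 := h₁.1 (hiff.2 hp2)
        rw [d1] at hp1; linarith
      · rw [d1, d2]
    apply LeftOrder.ext'
    funext a b
    apply propext
    rw [hchar o₁, hchar o₂]
    constructor
    · exact hlexcongr _ _ (fun j hj => by rw [hδeq j hj]) _
    · exact hlexcongr _ _ (fun j hj => by rw [hδeq j hj]) _
  have hFsurj : Function.Surjective F := by
    intro ε
    set ε' : ℕ → Bool := fun j => if h : j < m then ε ⟨j, h⟩ else true with hε'def
    refine ⟨mkLex ⟨hbot, htop, hnorm, hstrict, hadd, hker⟩ ε', ?_⟩
    funext i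
    set o := mkLex ⟨hbot, htop, hnorm, hstrict, hadd, hker⟩ ε' with hodef
    have hlt : o.lt 1 (w i.1 i.2) ↔ (ε i = true) := by
      show lexPos s φ m ε' (1⁻¹ * w i.1 i.2) ↔ _
      rw [inv_one, one_mul]
      constructor
      · rintro ⟨j, hjm', h1, h2, h3⟩
        have hji : j = i.1 :=
          level_unique hstrict hjm' i.2 h1 h2 (hw1 i.1 i.2) (hw2 i.1 i.2)
        rw [hji] at h3
        have hε'j : ε' i.1 = ε i := by
          rw [hε'def]
          simp only [dif_pos i.2]
        rw [hε'j] at h3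
        rcases hb : ε i with _ | _
        · exfalso
          rw [hb] at h3
          simp only [Bool.false_eq_true, if_false] at h3
          nlinarith [hw3 i.1 i.2]
        · rfl
      · intro hε
        refine ⟨i.1, i.2, hw1 i.1 i.2, hw2 i.1 i.2, ?_⟩
        have he : ε' i.1 = true := by
          rw [hε'def]; simp only [i.2, dif_pos]
          rw [show (⟨i.1, i.2⟩ : Fin m) = i from Fin.ext rfl]
          exact hε
        rw [he]
        simp only [if_true, one_mul]
        exact hw3 i.1 i.2
    rw [hFdef]
    rcases hb : ε i with _ | _
    · simp only []
      apply decide_eq_false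
      rw [hlt, hb]
      simp
    · apply decide_eq_true
      rw [hlt]
      exact hb
  have hcard : Nat.card (LeftOrder G) = 2 ^ m := by
    rw [Nat.card_eq_of_bijective F ⟨hFinj, hFsurj⟩]
    simp [Nat.card_eq_fintype_card]
  -- Conradian
  have hConr : ∀ o : LeftOrder G, o.IsConradian := by
    intro o f g hf hg
    have hfne : f ≠ 1 := fun h => by rw [h] at hf; exact o.irrefl 1 hf
    have hgne : g ≠ 1 := fun h => by rw [h] at hg; exact o.irrefl 1 hg
    obtain ⟨jf, hjfm, hf1, hf2⟩ := level_exists hbot htop hfne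
    obtain ⟨jg, hjgm, hg1, hg2⟩ := level_exists hbot htop hgne
    rw [o.lt_iff_pos]
    rcases lt_trichotomy jf jg with hc | hc | hc
    · -- dominant level jg
      have hft1 : f ∈ s (jg + 1) := series_mono hstrict (by omega) (by omega) hf1
      have hftk : f ∈ s jg := series_mono hstrict (by omega) (by omega) hf1
      have hφf : φ jg f = 0 := (hker jg hjgm f hft1).2 hftk
      have hymem : g⁻¹ * (f * (g * g)) ∈ s (jg + 1) :=
        mul_mem ((s _).inv_mem hg1) (mul_mem hft1 (mul_mem hg1 hg1))
      have hφy : φ jg (g⁻¹ * (f * (g * g))) = φ jg g := by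
        rw [hadd jg hjgm _ ((s _).inv_mem hg1) _ (mul_mem hft1 (mul_mem hg1 hg1)),
            hadd jg hjgm f hft1 _ (mul_mem hg1 hg1), hadd jg hjgm g hg1 g hg1,
            sadd_inv (hadd jg hjgm) hg1, hφf]
        ring
      have hsg : 0 < δf o jg * φ jg g := (hSD o jg hjgm g hg1 hg2).1 hg
      have hsign : 0 < δf o jg * φ jg (g⁻¹ * (f * (g * g))) := by rw [hφy]; exact hsg
      refine (hSD o jg hjgm _ hymem ?_).2 hsign
      intro hmem
      have h0 := (hker jg hjgm _ hymem).2 hmem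
      rw [h0, mul_zero] at hsign
      exact lt_irrefl _ hsign
    · -- equal levels
      subst hc
      have hymem : g⁻¹ * (f * (g * g)) ∈ s (jf + 1) :=
        mul_mem ((s _).inv_mem hg1) (mul_mem hf1 (mul_mem hg1 hg1))
      have hφy : φ jf (g⁻¹ * (f * (g * g))) = φ jf f + φ jf g := by
        rw [hadd jf hjfm _ ((s _).inv_mem hg1) _ (mul_mem hf1 (mul_mem hg1 hg1)),
            hadd jf hjfm f hf1 _ (mul_mem hg1 hg1), hadd jf hjfm g hg1 g hg1,
            sadd_inv (hadd jf hjfm) hg1]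
        ring
      have hsf : 0 < δf o jf * φ jf f := (hSD o jf hjfm f hf1 hf2).1 hf
      have hsg : 0 < δf o jf * φ jf g := (hSD o jf hjfm g hg1 hg2).1 hg
      have hsign : 0 < δf o jf * φ jf (g⁻¹ * (f * (g * g))) := by
        rw [hφy, mul_add]; linarith
      refine (hSD o jf hjfm _ hymem ?_).2 hsign
      intro hmem
      have h0 := (hker jf hjfm _ hymem).2 hmem
      rw [h0, mul_zero] at hsign
      exact lt_irrefl _ hsign
    · -- dominant level jf
      have hgt1 : g ∈ s (jf + 1) := series_mono hstrict (by omega) (by omega) hg1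
      have hgtk : g ∈ s jf := series_mono hstrict (by omega) (by omega) hg1
      have hφg : φ jf g = 0 := (hker jf hjfm g hgt1).2 hgtk
      have hymem : g⁻¹ * (f * (g * g)) ∈ s (jf + 1) :=
        mul_mem ((s _).inv_mem hgt1) (mul_mem hf1 (mul_mem hgt1 hgt1))
      have hφy : φ jf (g⁻¹ * (f * (g * g))) = φ jf f := by
        rw [hadd jf hjfm _ ((s _).inv_mem hgt1) _ (mul_mem hf1 (mul_mem hgt1 hgt1)),
            hadd jf hjfm f hf1 _ (mul_mem hgt1 hgt1), hadd jf hjfm g hgt1 g hgt1,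
            sadd_inv (hadd jf hjfm) hgt1, hφg]
        ring
      have hsf : 0 < δf o jf * φ jf f := (hSD o jf hjfm f hf1 hf2).1 hf
      have hsign : 0 < δf o jf * φ jf (g⁻¹ * (f * (g * g))) := by rw [hφy]; exact hsf
      refine (hSD o jf hjfm _ hymem ?_).2 hsign
      intro hmem
      have h0 := (hker jf hjfm _ hymem).2 hmem
      rw [h0, mul_zero] at hsign
      exact lt_irrefl _ hsign
  -- classification of convex subgroups
  have hClass : ∀ (o : LeftOrder G) (H : Subgroup G), o.IsConvex H ↔ ∃ i ≤ m, H = s i := by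
    intro o H
    constructor
    · intro hH
      have hP0 : s 0 ≤ H := by rw [hbot]; exact bot_le
      obtain ⟨i, him, hsub, hmax⟩ :
          ∃ i, i ≤ m ∧ s i ≤ H ∧ (i < m → ¬ s (i + 1) ≤ H) := by
        refine ⟨Nat.findGreatest (fun j => s j ≤ H) m, Nat.findGreatest_le m, ?_, ?_⟩
        · exact Nat.findGreatest_spec (P := fun j => s j ≤ H) (Nat.zero_le m) hP0
        · intro hlt
          exact Nat.findGreatest_is_greatest (P := fun j => s j ≤ H) (n := m)
            (k := Nat.findGreatest (fun j => s j ≤ H) m + 1) (by omega) (by omega)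
      refine ⟨i, him, ?_⟩
      rcases eq_or_lt_of_le him with rfl | hilt
      · -- i = m : H = ⊤
        rw [htop]
        exact le_antisymm le_top (htop ▸ hsub)
      -- i < m
      have hnot : ¬ s (i + 1) ≤ H := hmax hilt
      obtain ⟨x, hx1, hxH⟩ := SetLike.not_le_iff_exists.1 hnot
      refine le_antisymm ?_ hsub
      intro y hyH
      by_contra hyn
      -- positive representatives
      obtain ⟨x', hx'1, hx'H, hx'pos⟩ :
          ∃ x', x' ∈ s (i + 1) ∧ x' ∉ H ∧ o.lt 1 x' := by
        have hxne : x ≠ 1 := fun h => hxH (h ▸ H.one_mem)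
        rcases pos_or_pos_inv (o := o) hxne with h | h
        · exact ⟨x, hx1, hxH, h⟩
        · exact ⟨x⁻¹, (s _).inv_mem hx1,
            fun hm => hxH (by simpa using H.inv_mem hm), h⟩
      obtain ⟨y', hy'H, hy'n, hy'pos⟩ :
          ∃ y', y' ∈ H ∧ y' ∉ s i ∧ o.lt 1 y' := by
        have hyne : y ≠ 1 := fun h => hyn (h ▸ (s i).one_mem)
        rcases pos_or_pos_inv (o := o) hyne with h | h
        · exact ⟨y, hyH, hyn, h⟩
        · exact ⟨y⁻¹, H.inv_mem hyH,
            fun hm => hyn (by simpa using (s i).inv_mem hm), h⟩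
      have hx'ne : x' ≠ 1 := fun h => hx'H (h ▸ H.one_mem)
      have hy'ne : y' ≠ 1 := fun h => hy'n (h ▸ (s i).one_mem)
      obtain ⟨p, hpm, hp1, hp2⟩ := level_exists hbot htop hx'ne
      obtain ⟨r, hrm, hr1, hr2⟩ := level_exists hbot htop hy'ne
      have hpi : p ≤ i := by
        by_contra hc
        exact hp2 (series_mono hstrict (by omega : i + 1 ≤ p) (by omega) hx'1)
      have hir : i ≤ r := by
        by_contra hc
        exact hy'n (series_mono hstrict (by omega : r + 1 ≤ i) (by omega) hr1)
      rcases Nat.lt_or_ge p r with hpr | hrp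
      · -- x' is below y', so x' ∈ H by convexity
        have hx'r : x' ∈ s r := series_mono hstrict (by omega : p + 1 ≤ r) (by omega) hp1
        have hx'r1 : x' ∈ s (r + 1) := series_mono hstrict (by omega) (by omega) hp1
        have hφx'r : φ r x' = 0 := (hker r hrm x' hx'r1).2 hx'r
        have hmem : x'⁻¹ * y' ∈ s (r + 1) := mul_mem ((s _).inv_mem hx'r1) hr1
        have hφ : φ r (x'⁻¹ * y') = φ r y' := by
          rw [hadd r hrm _ ((s _).inv_mem hx'r1) _ hr1, sadd_inv (hadd r hrm) hx'r1, hφx'r]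
          ring
        have hφy'ne : φ r y' ≠ 0 := fun h0 => hr2 ((hker r hrm y' hr1).1 h0)
        have hsy : 0 < δf o r * φ r y' := (hSD o r hrm y' hr1 hr2).1 hy'pos
        have hmem2 : x'⁻¹ * y' ∉ s r := by
          intro hm
          have h0 := (hker r hrm _ hmem).2 hm
          rw [hφ] at h0
          exact hφy'ne h0
        have hlt : o.lt x' y' := by
          rw [o.lt_iff_pos]
          refine (hSD o r hrm _ hmem hmem2).2 ?_
          rw [hφ]
          exact hsy
        exact hx'H (hH x' 1 y' H.one_mem hy'H (le_of_lt hx'pos) (le_of_lt hlt))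
      · -- same level: p = r = i
        have hpieq : p = i := by omega
        have hrieq : r = i := by omega
        rw [hpieq] at hp1 hp2 hpm
        rw [hrieq] at hr1 hr2
        have hsx : 0 < δf o i * φ i x' := (hSD o i hpm x' hp1 hp2).1 hx'pos
        have hsy : 0 < δf o i * φ i y' := (hSD o i hpm y' hr1 hr2).1 hy'pos
        obtain ⟨k, l, hk, hl, hkl⟩ := rat_commensurable_pos hsx hsy
        have hkl' : (k : ℚ) * φ i x' = l * φ i y' := by
          apply mul_left_cancel₀ (hδne o i)
          linear_combination hkl
        have humem : x' ^ k * (y' ^ l)⁻¹ ∈ s i := by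
          apply (hker i hpm _ (mul_mem (pow_mem hp1 k) ((s _).inv_mem (pow_mem hr1 l)))).1
          rw [hadd i hpm _ (pow_mem hp1 k) _ ((s _).inv_mem (pow_mem hr1 l)),
              sadd_inv (hadd i hpm) (pow_mem hr1 l),
              sadd_pow (hadd i hpm) hp1, sadd_pow (hadd i hpm) hr1]
          linear_combination hkl'
        have hxkH : x' ^ k ∈ H := by
          have he : x' ^ k = (x' ^ k * (y' ^ l)⁻¹) * y' ^ l := by group
          rw [he]
          exact mul_mem (hsub humem) (pow_mem hy'H l)
        exact hx'H (hH.of_pow_mem (by omega) hxkH)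
    · rintro ⟨i, him, rfl⟩
      exact hconv o i him
  exact ⟨hcard, hConr, hClass⟩
end

section
/- Let G be a Tararin group with rational series {1} = G₀ ◁ ⋯ ◁ G_m = G, m ≥ 2. The conjugation action of G on LO(G) has exactly two orbits. Moreover, let γ_T be an element of G ∖ G_{m−1} which acts on G_{m−1}/G_{m−2} as multiplication by a negative number; then for any pair of left-orderings ⪯, ⪯′ of G there exists g ∈ G_{m−1} ∪ γ_T G_{m−1} such that the conjugate ordering g(⪯) coincides with ⪯′ on G_{m−1}. -/
namespace TararinAux

open LeftOrder

variable {G : Type*} [Group G]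

/-! ### Basic lemmas about left orders -/

theorem lo_ext {o o' : LeftOrder G} (h : o.lt = o'.lt) : o = o' := by
  cases o; cases o'; cases h; rfl

theorem lo_ext' {o o' : LeftOrder G} (h : ∀ a b : G, o.lt a b ↔ o'.lt a b) : o = o' :=
  lo_ext (funext fun a => funext fun b => propext (h a b))

theorem asymm {o : LeftOrder G} {a b : G} (h : o.lt a b) : ¬ o.lt b a :=
  fun h' => o.irrefl a (o.trans _ _ _ h h')

theorem lt_iff_pos (o : LeftOrder G) (a b : G) : o.lt a b ↔ o.lt 1 (a⁻¹ * b) := by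
  constructor
  · intro h
    have := o.mul_left _ _ a⁻¹ h
    simpa using this
  · intro h
    have := o.mul_left _ _ a h
    simpa [mul_assoc] using this

theorem pos_mul {o : LeftOrder G} {a b : G} (ha : o.lt 1 a) (hb : o.lt 1 b) :
    o.lt 1 (a * b) := by
  have := o.mul_left _ _ a hb
  rw [mul_one] at this
  exact o.trans _ _ _ ha this

theorem pos_pow {o : LeftOrder G} {a : G} (ha : o.lt 1 a) : ∀ k : ℕ, 1 ≤ k → o.lt 1 (a ^ k) := by
  intro k
  induction k with
  | zero => omega
  | succ n ih =>
    intro _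
    rcases Nat.eq_or_lt_of_le (Nat.zero_le n) with h | h
    · simpa [← h] using ha
    · have := ih h
      rw [pow_succ]
      exact pos_mul this ha

theorem neg_inv {o : LeftOrder G} {a : G} (ha : o.lt a 1) : o.lt 1 a⁻¹ := by
  have := o.mul_left _ _ a⁻¹ ha
  simpa using this

theorem pos_inv {o : LeftOrder G} {a : G} (ha : o.lt 1 a) : o.lt a⁻¹ 1 := by
  have := o.mul_left _ _ a⁻¹ ha
  simpa using this

theorem not_pos_inv {o : LeftOrder G} {a : G} (ha : o.lt 1 a) : ¬ o.lt 1 a⁻¹ :=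
  asymm (pos_inv ha)

theorem pos_or_inv {o : LeftOrder G} {a : G} (ha : a ≠ 1) : o.lt 1 a ∨ o.lt 1 a⁻¹ := by
  rcases o.total 1 a with h | h | h
  · exact Or.inl h
  · exact absurd h.symm ha
  · exact Or.inr (neg_inv h)

/-! ### conj lemmas -/

theorem conj_lt (o : LeftOrder G) (g a b : G) :
    (o.conj g).lt a b ↔ o.lt (g * a * g⁻¹) (g * b * g⁻¹) := Iff.rfl

theorem conj_one (o : LeftOrder G) : o.conj 1 = o := by
  apply lo_ext'
  intro a b
  rw [conj_lt]
  simp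

theorem conj_conj (o : LeftOrder G) (g g' : G) :
    (o.conj g).conj g' = o.conj (g * g') := by
  apply lo_ext'
  intro a b
  rw [conj_lt, conj_lt, conj_lt]
  have h1 : ∀ x : G, g * (g' * x * g'⁻¹) * g⁻¹ = (g * g') * x * (g * g')⁻¹ := by
    intro x; group
  rw [h1, h1]

theorem conj_pos (o : LeftOrder G) (g a : G) :
    (o.conj g).lt 1 a ↔ o.lt 1 (g * a * g⁻¹) := by
  rw [conj_lt]
  simp

/-! ### reversed order -/

def revo (o : LeftOrder G) : LeftOrder G where
  lt a b := o.lt b a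
  irrefl a := o.irrefl a
  trans a b c hab hbc := o.trans _ _ _ hbc hab
  total a b := by
    rcases o.total a b with h | h | h
    · exact Or.inr (Or.inr h)
    · exact Or.inr (Or.inl h)
    · exact Or.inl h
  mul_left a b c h := o.mul_left _ _ _ h

theorem revo_pos (o : LeftOrder G) (a : G) : (revo o).lt 1 a ↔ o.lt 1 a⁻¹ := by
  constructor
  · intro h; exact neg_inv h
  · intro h
    have := o.mul_left _ _ a h
    show o.lt a 1
    simpa using this

end TararinAux

namespace TararinAux

section Series

variable {G : Type*} [Group G] {m : ℕ} {s : ℕ → Subgroup G} {φ : ℕ → G → ℚ}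
variable (hrs : IsRationalSeries m s φ)

include hrs

theorem s_mono {i j : ℕ} (hij : i ≤ j) (hj : j ≤ m) : s i ≤ s j := by
  induction j with
  | zero => simpa [Nat.le_zero.mp hij] using le_refl _
  | succ n ih =>
    rcases Nat.eq_or_lt_of_le hij with h | h
    · simp [h]
    · exact le_trans (ih (by omega) (by omega)) (le_of_lt (hrs.2.2.2.1 n (by omega)))

theorem phi_mul {i : ℕ} (hi : i < m) {a b : G} (ha : a ∈ s (i+1)) (hb : b ∈ s (i+1)) :
    φ i (a * b) = φ i a + φ i b :=
  hrs.2.2.2.2.1 i hi a ha b hb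

theorem phi_one {i : ℕ} (hi : i < m) : φ i 1 = 0 := by
  have := phi_mul hrs hi (one_mem _) (one_mem _)
  rw [mul_one] at this
  linarith

theorem phi_zero_iff {i : ℕ} (hi : i < m) {a : G} (ha : a ∈ s (i+1)) :
    φ i a = 0 ↔ a ∈ s i :=
  hrs.2.2.2.2.2 i hi a ha

theorem phi_inv {i : ℕ} (hi : i < m) {a : G} (ha : a ∈ s (i+1)) :
    φ i a⁻¹ = - φ i a := by
  have := phi_mul hrs hi ha (inv_mem ha)
  rw [mul_inv_cancel, phi_one hrs hi] at this
  linarith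

theorem phi_pow {i : ℕ} (hi : i < m) {a : G} (ha : a ∈ s (i+1)) (k : ℕ) :
    φ i (a ^ k) = k * φ i a := by
  induction k with
  | zero => simpa using phi_one hrs hi
  | succ n ih =>
    rw [pow_succ, phi_mul hrs hi (pow_mem ha n) ha, ih]
    push_cast
    ring

theorem phi_zpow {i : ℕ} (hi : i < m) {a : G} (ha : a ∈ s (i+1)) (l : ℤ) :
    φ i (a ^ l) = l * φ i a := by
  rcases l with n | n
  · rw [Int.ofNat_eq_coe, zpow_natCast, phi_pow hrs hi ha]
    push_cast; ring
  · rw [zpow_negSucc, phi_inv hrs hi (pow_mem ha _), phi_pow hrs hi ha]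
    push_cast; ring

theorem sM_normal {i : ℕ} (hi : i ≤ m) : (s i).Normal := hrs.2.2.1 i hi

theorem conj_mem' {i : ℕ} (hi : i ≤ m) {a : G} (g : G) (ha : a ∈ s i) :
    g * a * g⁻¹ ∈ s i :=
  (sM_normal hrs hi).conj_mem a ha g

theorem phi_conj {i : ℕ} (hi : i < m) {a g : G} (ha : a ∈ s (i+1)) (hg : g ∈ s (i+1)) :
    φ i (g * a * g⁻¹) = φ i a := by
  rw [phi_mul hrs hi (mul_mem hg ha) (inv_mem hg), phi_mul hrs hi hg ha,
    phi_inv hrs hi hg]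
  ring

theorem exists_phi_pos {i : ℕ} (hi : i < m) :
    ∃ a ∈ s (i + 1), 0 < φ i a := by
  obtain ⟨x, hx1, hx0⟩ := SetLike.exists_of_lt (hrs.2.2.2.1 i hi)
  have hφ : φ i x ≠ 0 := fun h => hx0 ((phi_zero_iff hrs hi hx1).mp h)
  rcases lt_or_gt_of_ne hφ with h | h
  · exact ⟨x⁻¹, inv_mem hx1, by rw [phi_inv hrs hi hx1]; linarith⟩
  · exact ⟨x, hx1, h⟩

end Series

/-! ### rational arithmetic helper -/

theorem exists_kl {α β : ℚ} (hα : α ≠ 0) (hβ : β ≠ 0) :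
    ∃ (k : ℕ) (l : ℤ), 0 < k ∧ l ≠ 0 ∧ (k : ℚ) * α = (l : ℚ) * β := by
  set r : ℚ := α / β with hr
  refine ⟨r.den, r.num, r.pos, ?_, ?_⟩
  · exact Rat.num_ne_zero.mpr (div_ne_zero hα hβ)
  · have h1 : α = r * β := by rw [hr, div_mul_cancel₀ _ hβ]
    have hd : (r.den : ℚ) ≠ 0 := by
      exact_mod_cast r.den_ne_zero
    have h2 : (r.den : ℚ) * r = r.num := by
      have h := Rat.num_div_den r
      have h3 : ((r.num : ℚ) / r.den) * r.den = r * r.den := by rw [h]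
      rw [div_mul_cancel₀ _ hd] at h3
      linarith
    rw [h1, ← mul_assoc, h2]

end TararinAux

namespace TararinAux

section Main

variable {G : Type*} [Group G]

/-- Sign coherence at level `i`: any two positive elements of `s (i+1) \ s i`
have `φ i`-values of the same sign. -/
def Coh (s : ℕ → Subgroup G) (φ : ℕ → G → ℚ) (o : LeftOrder G) (i : ℕ) : Prop :=
  ∀ a ∈ s (i+1), ∀ b ∈ s (i+1), φ i a ≠ 0 → φ i b ≠ 0 →
    o.lt 1 a → o.lt 1 b → (0 < φ i a ↔ 0 < φ i b)

/-- Domination at level `i`: positive elements of `s (i+1) \ s i` dominate `s i`. -/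
def Dom (s : ℕ → Subgroup G) (φ : ℕ → G → ℚ) (o : LeftOrder G) (i : ℕ) : Prop :=
  ∀ c ∈ s i, ∀ f ∈ s (i+1), φ i f ≠ 0 → o.lt 1 f → o.lt c f

variable {m : ℕ} {s : ℕ → Subgroup G} {φ : ℕ → G → ℚ}
variable (hrs : IsRationalSeries m s φ)

include hrs

theorem coh_zero (h0 : 0 < m) (o : LeftOrder G) : Coh s φ o 0 := by
  have key : ∀ a ∈ s 1, ∀ b ∈ s 1, o.lt 1 a → o.lt 1 b →
      0 < φ 0 a → φ 0 b < 0 → False := by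
    intro a ha b hb hpa hpb hφa hφb
    obtain ⟨k, l, hk, hl, hkl⟩ := exists_kl (ne_of_gt hφa) (ne_of_lt hφb)
    have hlneg : l < 0 := by
      rcases lt_trichotomy l 0 with h | h | h
      · exact h
      · exact absurd h hl
      · nlinarith [hkl, (by exact_mod_cast h : (0:ℚ) < (l:ℚ))]
    set n : ℕ := (-l).toNat with hn
    have hn1 : 1 ≤ n := by omega
    have hncast : (n : ℚ) = -(l : ℚ) := by
      have : ((-l).toNat : ℤ) = -l := Int.toNat_of_nonneg (by omega)
      exact_mod_cast this
    have hmem : a ^ k * b ^ n ∈ s 1 := mul_mem (pow_mem ha k) (pow_mem hb n)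
    have hφ0 : φ 0 (a ^ k * b ^ n) = 0 := by
      rw [phi_mul hrs h0 (pow_mem ha k) (pow_mem hb n), phi_pow hrs h0 ha,
        phi_pow hrs h0 hb, hncast]
      linarith [hkl]
    have hbot : a ^ k * b ^ n ∈ s 0 := (phi_zero_iff hrs h0 hmem).mp hφ0
    rw [hrs.1, Subgroup.mem_bot] at hbot
    have heq : a ^ k = (b ^ n)⁻¹ := eq_inv_of_mul_eq_one_left hbot
    have h1 : o.lt 1 (a ^ k) := pos_pow hpa k hk
    have h2 : o.lt 1 (b ^ n) := pos_pow hpb n hn1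
    rw [heq] at h1
    exact not_pos_inv h2 h1
  intro a ha b hb hφa hφb hpa hpb
  rcases lt_or_gt_of_ne hφa with h1 | h1 <;> rcases lt_or_gt_of_ne hφb with h2 | h2
  · constructor <;> intro h <;> linarith
  · exact absurd (key b hb a ha hpb hpa h2 h1) (fun h => h)
  · exact absurd (key a ha b hb hpa hpb h1 h2) (fun h => h)
  · constructor <;> intro _ <;> assumption

/-- An element acting on the `i`-th level by a negative rational cannot lie in `s (i+1)`. -/
theorem negActs_not_mem {i : ℕ} (hi : i < m) {t : G} {q : ℚ} (hq : q < 0)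
    (hact : ∀ h ∈ s (i+1), φ i (t * h * t⁻¹) = q * φ i h) : t ∉ s (i+1) := by
  intro ht
  obtain ⟨z, hz, hφz⟩ := exists_phi_pos hrs hi
  have h1 : φ i (t * z * t⁻¹) = φ i z := phi_conj hrs hi hz ht
  have h2 : φ i (t * z * t⁻¹) = q * φ i z := hact z hz
  nlinarith

theorem negActs_inv {i : ℕ} (hi : i < m) {t : G} {q : ℚ} (hq : q < 0)
    (hact : ∀ h ∈ s (i+1), φ i (t * h * t⁻¹) = q * φ i h) :
    q⁻¹ < 0 ∧ ∀ h ∈ s (i+1), φ i (t⁻¹ * h * (t⁻¹)⁻¹) = q⁻¹ * φ i h := by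
  refine ⟨by simpa using inv_lt_zero.mpr hq, ?_⟩
  intro h hh
  have hmem : t⁻¹ * h * (t⁻¹)⁻¹ ∈ s (i+1) := conj_mem' hrs (by omega) t⁻¹ hh
  have := hact _ hmem
  have hid : t * (t⁻¹ * h * (t⁻¹)⁻¹) * t⁻¹ = h := by group
  rw [hid] at this
  have hq0 : q ≠ 0 := ne_of_lt hq
  field_simp at this ⊢
  linarith

/-- **Key domination lemma** (Tararin/Klein-bottle argument): a positive element `t`
acting on the `i`-th level by a negative rational dominates all of `s (i+1)`. -/
theorem dominate {i : ℕ} (hi : i < m) {o : LeftOrder G}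
    (hC : Coh s φ o i) (hD : Dom s φ o i) {t : G} {q : ℚ} (hq : q < 0)
    (hact : ∀ h ∈ s (i+1), φ i (t * h * t⁻¹) = q * φ i h) (hpt : o.lt 1 t) :
    (∀ x ∈ s (i+1), o.lt x t) ∧ (∀ x ∈ s (i+1), o.lt t⁻¹ x) := by
  have htm : t ∉ s (i+1) := negActs_not_mem hrs hi hq hact
  -- Claim A : elements of `s (i+1) \ s i` are below `t`.
  have claimA : ∀ y ∈ s (i+1), φ i y ≠ 0 → o.lt y t := by
    intro y hy hφy
    rcases o.total y t with h | h | h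
    · exact h
    · exact absurd (h ▸ hy) htm
    exfalso
    have h1 : o.lt 1 (t⁻¹ * y) := (lt_iff_pos o t y).mp h
    have hpy : o.lt 1 y := by
      have := pos_mul hpt h1
      rwa [mul_inv_cancel_left] at this
    set z := t⁻¹ * y * t with hzdef
    have hz : z ∈ s (i+1) := by
      have := conj_mem' hrs (by omega) t⁻¹ hy
      rwa [inv_inv] at this
    have hpz : o.lt 1 z := by
      have := pos_mul h1 hpt
      rw [hzdef]
      exact this
    have hyz : φ i y = q * φ i z := by
      have := hact z hz
      have hid : t * z * t⁻¹ = y := by rw [hzdef]; group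
      rwa [hid] at this
    have hφz : φ i z ≠ 0 := by
      intro h0
      rw [h0, mul_zero] at hyz
      exact hφy hyz
    have hiff := hC z hz y hy hφz hφy hpz hpy
    rcases lt_or_gt_of_ne hφz with h' | h'
    · have : ¬ (0 < φ i y) := fun hy' => by
        have := hiff.mpr hy'; linarith
      nlinarith
    · have : 0 < φ i y := hiff.mp h'
      nlinarith
  have part1 : ∀ x ∈ s (i+1), o.lt x t := by
    intro x hx
    by_cases hφx : φ i x = 0
    · have hxi : x ∈ s i := (phi_zero_iff hrs hi hx).mp hφx
      obtain ⟨z₀, hz₀, hφz₀⟩ := exists_phi_pos hrs hi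
      have hz₀ne : z₀ ≠ 1 := by
        intro h
        rw [h, phi_one hrs hi] at hφz₀
        exact lt_irrefl 0 hφz₀
      rcases pos_or_inv (o := o) hz₀ne with hp | hp
      · exact o.trans _ _ _ (hD x hxi z₀ hz₀ (ne_of_gt hφz₀) hp) (claimA z₀ hz₀ (ne_of_gt hφz₀))
      · have hmem : z₀⁻¹ ∈ s (i+1) := inv_mem hz₀
        have hφ : φ i z₀⁻¹ ≠ 0 := by
          rw [phi_inv hrs hi hz₀]; intro h; apply ne_of_gt hφz₀; linarith
        exact o.trans _ _ _ (hD x hxi z₀⁻¹ hmem hφ hp) (claimA z₀⁻¹ hmem hφ)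
    · exact claimA x hx hφx
  refine ⟨part1, ?_⟩
  intro x hx
  rcases o.total t⁻¹ x with h | h | h
  · exact h
  · exfalso; apply htm
    have : x⁻¹ ∈ s (i+1) := inv_mem hx
    rwa [← h, inv_inv] at this
  exfalso
  have h1 : o.lt 1 (x⁻¹ * t⁻¹) := (lt_iff_pos o x t⁻¹).mp h
  have h2 : o.lt t (t * (x⁻¹ * t⁻¹)) := by
    have := o.mul_left _ _ t h1
    rwa [mul_one] at this
  have h3 : t * (x⁻¹ * t⁻¹) = t * x⁻¹ * t⁻¹ := by rw [mul_assoc]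
  rw [h3] at h2
  have hy : t * x⁻¹ * t⁻¹ ∈ s (i+1) := conj_mem' hrs (by omega) t (inv_mem hx)
  exact asymm (part1 _ hy) h2

end Main

end TararinAux

namespace TararinAux

section Main2

variable {G : Type*} [Group G] {m : ℕ} {s : ℕ → Subgroup G} {φ : ℕ → G → ℚ}
variable (hrs : IsRationalSeries m s φ)

include hrs

/-- Sign comparison: a positive element of `s (i+2) \ s (i+1)` has `φ (i+1)`-value
of the same sign as the dominating element `t`, and a bounded power relation. -/
theorem sgn {i : ℕ} (him : i + 1 < m) {o : LeftOrder G} {t : G}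
    (ht2 : t ∈ s (i+1+1)) (hφt : φ (i+1) t ≠ 0) (hpt : o.lt 1 t)
    (dom1 : ∀ x ∈ s (i+1), o.lt x t)
    {f : G} (hf : f ∈ s (i+1+1)) (hφf : φ (i+1) f ≠ 0) (hpf : o.lt 1 f) :
    ∃ (k n : ℕ), 0 < k ∧ 0 < n ∧ (t ^ n)⁻¹ * f ^ k ∈ s (i+1) ∧
      (0 < φ (i+1) f ↔ 0 < φ (i+1) t) := by
  obtain ⟨k, l, hk, hl, hkl⟩ := exists_kl hφf hφt
  have hwmem : (t ^ l)⁻¹ * f ^ k ∈ s (i+1) := by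
    have hmem2 : (t ^ l)⁻¹ * f ^ k ∈ s (i+1+1) :=
      mul_mem (inv_mem (zpow_mem ht2 l)) (pow_mem hf k)
    apply (phi_zero_iff hrs him hmem2).mp
    rw [phi_mul hrs him (inv_mem (zpow_mem ht2 l)) (pow_mem hf k),
      phi_inv hrs him (zpow_mem ht2 l), phi_zpow hrs him ht2, phi_pow hrs him hf]
    linarith
  have hlpos : 0 < l := by
    rcases lt_trichotomy l 0 with hneg' | h0 | hpos
    · exfalso
      set n : ℕ := (-l).toNat with hndef
      have hn1 : 1 ≤ n := by omega
      have hcast : l = -(n : ℤ) := by omega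
      have htl : t ^ l = (t ^ n)⁻¹ := by
        rw [hcast, zpow_neg, zpow_natCast]
      rw [htl, inv_inv] at hwmem
      have hfk : o.lt 1 (f ^ k) := pos_pow hpf k hk
      have h5 : o.lt (t ^ n) (t ^ n * f ^ k) := by
        have := o.mul_left _ _ (t ^ n) hfk
        rwa [mul_one] at this
      have h6 := dom1 _ hwmem
      have h7 : o.lt t (t ^ n) ∨ t = t ^ n := by
        rcases Nat.eq_or_lt_of_le hn1 with h1 | h1
        · right; rw [← h1, pow_one]
        · left
          have hp := pos_pow hpt (n - 1) (by omega)
          have h11 := o.mul_left _ _ t hp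
          rw [mul_one] at h11
          have h12 : t * t ^ (n - 1) = t ^ n := by
            rw [← pow_succ']
            congr 1
            omega
          rwa [h12] at h11
      rcases h7 with h7 | h7
      · exact o.irrefl _ (o.trans _ _ _ (o.trans _ _ _ h7 h5) h6)
      · rw [← h7] at h5 h6
        exact o.irrefl _ (o.trans _ _ _ h5 h6)
    · exact absurd h0 hl
    · exact hpos
  set n : ℕ := l.toNat with hndef
  have hcast : l = (n : ℤ) := by omega
  have htl : t ^ l = t ^ n := by rw [hcast, zpow_natCast]
  rw [htl] at hwmem
  have hkQ : (0 : ℚ) < (k : ℚ) := by exact_mod_cast hk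
  have hlQ : (0 : ℚ) < (l : ℚ) := by exact_mod_cast hlpos
  refine ⟨k, n, hk, by omega, hwmem, ?_⟩
  constructor
  · intro h; nlinarith
  · intro h; nlinarith

/-- The main induction: sign coherence and domination hold at every level,
for every left order. -/
theorem coh_dom
    (hneg : ∀ j, 1 ≤ j → j < m →
      ∃ g ∈ s (j + 1), ∃ q : ℚ, q < 0 ∧
        ∀ h ∈ s j, φ (j - 1) (g * h * g⁻¹) = q * φ (j - 1) h)
    (o : LeftOrder G) : ∀ i, i < m → Coh s φ o i ∧ Dom s φ o i := by
  intro i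
  induction i with
  | zero =>
    intro h0
    refine ⟨coh_zero hrs h0 o, ?_⟩
    intro c hc f hf hφf hpf
    rw [hrs.1, Subgroup.mem_bot] at hc
    rw [hc]
    exact hpf
  | succ i ih =>
    intro him
    obtain ⟨hC, hD⟩ := ih (by omega)
    obtain ⟨t₀, ht₀2, q₀, hq₀, hact₀⟩ := hneg (i+1) (by omega) him
    have hact₀' : ∀ h ∈ s (i+1), φ i (t₀ * h * t₀⁻¹) = q₀ * φ i h := by
      simpa using hact₀
    have ht₀m : t₀ ∉ s (i+1) := negActs_not_mem hrs (by omega) hq₀ hact₀'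
    have ht₀ne : t₀ ≠ 1 := fun h => ht₀m (h ▸ one_mem _)
    obtain ⟨t, q, ht2, hq, hact, hpt⟩ :
        ∃ (t : G) (q : ℚ), t ∈ s (i+1+1) ∧ q < 0 ∧
          (∀ h ∈ s (i+1), φ i (t * h * t⁻¹) = q * φ i h) ∧ o.lt 1 t := by
      rcases pos_or_inv (o := o) ht₀ne with hp | hp
      · exact ⟨t₀, q₀, ht₀2, hq₀, hact₀', hp⟩
      · obtain ⟨hq', hact'⟩ := negActs_inv hrs (by omega) hq₀ hact₀'
        exact ⟨t₀⁻¹, q₀⁻¹, inv_mem ht₀2, hq', hact', hp⟩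
    have htm : t ∉ s (i+1) := negActs_not_mem hrs (by omega) hq hact
    have hφt : φ (i+1) t ≠ 0 := fun h => htm ((phi_zero_iff hrs him ht2).mp h)
    obtain ⟨dom1, dom2⟩ := dominate hrs (by omega) hC hD hq hact hpt
    constructor
    · intro a ha b hb hφa hφb hpa hpb
      obtain ⟨_, _, _, _, _, hsa⟩ := sgn hrs him ht2 hφt hpt dom1 ha hφa hpa
      obtain ⟨_, _, _, _, _, hsb⟩ := sgn hrs him ht2 hφt hpt dom1 hb hφb hpb
      exact hsa.trans hsb.symm
    · intro c hc f hf hφf hpf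
      rcases o.total c f with h | h | h
      · exact h
      · exfalso
        apply hφf
        rw [← h]
        exact (phi_zero_iff hrs him (s_mono hrs (Nat.le_succ _) (by omega) hc)).mpr hc
      exfalso
      have key : ∀ k : ℕ, 1 ≤ k → ∃ C ∈ s (i+1), o.lt (f ^ k) C := by
        intro k
        induction k with
        | zero => omega
        | succ k ihk =>
          intro _
          rcases Nat.eq_or_lt_of_le (Nat.zero_le k) with h0 | h0
          · refine ⟨c, hc, ?_⟩
            rw [← h0, pow_one]
            exact h
          · obtain ⟨C, hCmem, hltC⟩ := ihk h0
            have h1 := o.mul_left _ _ f hltC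
            have h2 : f * f ^ k = f ^ (k+1) := (pow_succ' f k).symm
            have hC'mem : f * C * f⁻¹ ∈ s (i+1) := conj_mem' hrs (by omega) f hCmem
            have h3 : f * C = (f * C * f⁻¹) * f := by group
            have h4 := o.mul_left _ _ (f * C * f⁻¹) h
            refine ⟨(f * C * f⁻¹) * c, mul_mem hC'mem hc, ?_⟩
            rw [h2, h3] at h1
            exact o.trans _ _ _ h1 h4
      obtain ⟨k, n, hk, hn, hw, _⟩ := sgn hrs him ht2 hφt hpt dom1 hf hφf hpf
      obtain ⟨C, hCmem, hlt⟩ := key k hk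
      have h5 : o.lt (t ^ n * ((t ^ n)⁻¹ * f ^ k)) C := by
        rw [mul_inv_cancel_left]
        exact hlt
      have h6 := o.mul_left _ _ (t ^ n)⁻¹ h5
      rw [inv_mul_cancel_left] at h6
      have hC''mem : (t ^ n)⁻¹ * C * ((t ^ n)⁻¹)⁻¹ ∈ s (i+1) :=
        conj_mem' hrs (by omega) (t ^ n)⁻¹ hCmem
      have h7 : (t ^ n)⁻¹ * C = ((t ^ n)⁻¹ * C * ((t ^ n)⁻¹)⁻¹) * (t ^ n)⁻¹ := by group
      rw [h7] at h6
      have h8 := o.mul_left _ _ ((t ^ n)⁻¹ * C * ((t ^ n)⁻¹)⁻¹)⁻¹ h6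
      rw [inv_mul_cancel_left] at h8
      have hdmem : ((t ^ n)⁻¹ * C * ((t ^ n)⁻¹)⁻¹)⁻¹ * ((t ^ n)⁻¹ * f ^ k) ∈ s (i+1) :=
        mul_mem (inv_mem hC''mem) hw
      have h9 := dom2 _ hdmem
      have h10 : o.lt ((t ^ n)⁻¹) t⁻¹ ∨ (t ^ n)⁻¹ = t⁻¹ := by
        rcases Nat.eq_or_lt_of_le hn with h1 | h1
        · right; rw [← h1, pow_one]
        · left
          have hp := pos_pow hpt (n - 1) (by omega)
          have h11 := o.mul_left _ _ (t ^ n)⁻¹ hp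
          rw [mul_one] at h11
          have h12 : (t ^ n)⁻¹ * t ^ (n - 1) = t⁻¹ := by
            have hns : t ^ n = t ^ (n - 1) * t := by
              rw [← pow_succ]
              congr 1
              omega
            simp [hns, mul_inv_rev, mul_assoc]
          rwa [h12] at h11
      rcases h10 with h10 | h10
      · exact o.irrefl _ (o.trans _ _ _ (o.trans _ _ _ h8 h10) h9)
      · have h8' : o.lt (((t ^ n)⁻¹ * C * ((t ^ n)⁻¹)⁻¹)⁻¹ * ((t ^ n)⁻¹ * f ^ k)) t⁻¹ := by
          rw [← h10]
          exact h8
        exact o.irrefl _ (o.trans _ _ _ h8' h9)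

end Main2

end TararinAux

namespace TararinAux

/-- The sign of the left order `o` at level `i`. -/
def eps {G : Type*} [Group G] (s : ℕ → Subgroup G) (φ : ℕ → G → ℚ)
    (o : LeftOrder G) (i : ℕ) : Prop :=
  ∃ f, f ∈ s (i+1) ∧ 0 < φ i f ∧ o.lt 1 f

section Char

variable {G : Type*} [Group G] {m : ℕ} {s : ℕ → Subgroup G} {φ : ℕ → G → ℚ}
variable (hrs : IsRationalSeries m s φ)

include hrs

theorem char_pos {i : ℕ} (hi : i < m) {o : LeftOrder G} (hC : Coh s φ o i)
    {g : G} (hg : g ∈ s (i+1)) (hφg : φ i g ≠ 0) (hp : o.lt 1 g) :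
    eps s φ o i ↔ 0 < φ i g := by
  rcases lt_or_gt_of_ne hφg with hneg' | hpos
  · constructor
    · rintro ⟨f, hf, hφf, hpf⟩
      have := hC f hf g hg (ne_of_gt hφf) hφg hpf hp
      exfalso
      have := this.mp hφf
      linarith
    · intro hx; linarith
  · exact iff_of_true ⟨g, hg, hpos, hp⟩ hpos

theorem char {i : ℕ} (hi : i < m) {o : LeftOrder G} (hC : Coh s φ o i)
    {g : G} (hg : g ∈ s (i+1)) (hφg : φ i g ≠ 0) :
    o.lt 1 g ↔ (eps s φ o i ↔ 0 < φ i g) := by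
  have hgne : g ≠ 1 := by
    intro h
    rw [h, phi_one hrs hi] at hφg
    exact hφg rfl
  by_cases hp : o.lt 1 g
  · exact iff_of_true hp (char_pos hrs hi hC hg hφg hp)
  · apply iff_of_false hp
    rcases pos_or_inv (o := o) hgne with h | h
    · exact absurd h hp
    have hφinv : φ i g⁻¹ = - φ i g := phi_inv hrs hi hg
    have h2 := char_pos hrs hi hC (inv_mem hg) (by rw [hφinv]; simpa using hφg) h
    rw [hφinv] at h2
    intro hcontra
    have h3 := hcontra.symm.trans h2
    rcases lt_or_gt_of_ne hφg with h' | h'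
    · have := h3.mpr (by linarith); linarith
    · have := h3.mp h'; linarith

theorem eps_iff_wit {i : ℕ} (hi : i < m) {o : LeftOrder G} (hC : Coh s φ o i)
    {a₀ : G} (ha₀ : a₀ ∈ s (i+1)) (hφ : 0 < φ i a₀) :
    eps s φ o i ↔ o.lt 1 a₀ := by
  have h := char hrs hi hC ha₀ (ne_of_gt hφ)
  constructor
  · intro he; exact h.mpr (iff_of_true he hφ)
  · intro hp; exact (h.mp hp).mpr hφ

/-- Conjugation by an element of `s (i+1)` preserves the sign at level `i`. -/
theorem eps_conj_eq {i : ℕ} (hi : i < m) {o : LeftOrder G} {g : G}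
    (hCc : Coh s φ (o.conj g) i) (hC : Coh s φ o i) (hg : g ∈ s (i+1)) :
    eps s φ (o.conj g) i ↔ eps s φ o i := by
  obtain ⟨a₀, ha₀, hφ⟩ := exists_phi_pos hrs hi
  rw [eps_iff_wit hrs hi hCc ha₀ hφ, conj_pos]
  have hmem : g * a₀ * g⁻¹ ∈ s (i+1) := mul_mem (mul_mem hg ha₀) (inv_mem hg)
  have hφ' : 0 < φ i (g * a₀ * g⁻¹) := by rw [phi_conj hrs hi ha₀ hg]; exact hφ
  rw [← eps_iff_wit hrs hi hC hmem hφ']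

/-- Conjugation by an element acting by a negative rational at level `i`
flips the sign at level `i`. -/
theorem eps_conj_flip {i : ℕ} (hi : i < m) {o : LeftOrder G} {g : G} {q : ℚ}
    (hCc : Coh s φ (o.conj g) i) (hC : Coh s φ o i) (hq : q < 0)
    (hact : ∀ h ∈ s (i+1), φ i (g * h * g⁻¹) = q * φ i h) :
    eps s φ (o.conj g) i ↔ ¬ eps s φ o i := by
  obtain ⟨a₀, ha₀, hφ⟩ := exists_phi_pos hrs hi
  rw [eps_iff_wit hrs hi hCc ha₀ hφ, conj_pos]
  have hmem : g * a₀ * g⁻¹ ∈ s (i+1) := conj_mem' hrs (by omega) g ha₀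
  have hφ' : φ i (g * a₀ * g⁻¹) = q * φ i a₀ := hact a₀ ha₀
  have hφ'' : φ i (g * a₀ * g⁻¹) ≠ 0 := by rw [hφ']; nlinarith
  rw [char hrs hi hC hmem hφ'']
  have hneg' : ¬ (0 < φ i (g * a₀ * g⁻¹)) := by rw [hφ']; nlinarith
  constructor
  · intro h1 h2
    exact hneg' (h1.mp h2)
  · intro h1
    exact iff_of_false h1 hneg'

/-- The reversed order has opposite signs at all levels. -/
theorem eps_rev {i : ℕ} (hi : i < m) {o : LeftOrder G}
    (hCr : Coh s φ (revo o) i) (hC : Coh s φ o i) :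
    eps s φ (revo o) i ↔ ¬ eps s φ o i := by
  obtain ⟨a₀, ha₀, hφ⟩ := exists_phi_pos hrs hi
  rw [eps_iff_wit hrs hi hCr ha₀ hφ, revo_pos]
  have hφ' : φ i a₀⁻¹ = - φ i a₀ := phi_inv hrs hi ha₀
  have hφ'' : φ i a₀⁻¹ ≠ 0 := by rw [hφ']; linarith
  rw [char hrs hi hC (inv_mem ha₀) hφ'']
  have hneg' : ¬ (0 < φ i a₀⁻¹) := by rw [hφ']; linarith
  constructor
  · intro h1 h2
    exact hneg' (h1.mp h2)
  · intro h1
    exact iff_of_false h1 hneg'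

/-- Every nontrivial element of `s N` has a well-defined level below `N`. -/
theorem exists_level {N : ℕ} (hN : N ≤ m) {x : G} (hx : x ∈ s N) (hne : x ≠ 1) :
    ∃ i, i < N ∧ x ∈ s (i+1) ∧ φ i x ≠ 0 := by
  classical
  have hP : ∃ j, x ∈ s j := ⟨N, hx⟩
  have hj : x ∈ s (Nat.find hP) := Nat.find_spec hP
  have hjle : Nat.find hP ≤ N := Nat.find_min' hP hx
  have hj0 : Nat.find hP ≠ 0 := by
    intro h
    rw [h, hrs.1, Subgroup.mem_bot] at hj
    exact hne hj
  have hj1 : x ∈ s ((Nat.find hP - 1) + 1) := by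
    rw [(by omega : Nat.find hP - 1 + 1 = Nat.find hP)]
    exact hj
  refine ⟨Nat.find hP - 1, by omega, hj1, ?_⟩
  intro hφ
  exact Nat.find_min hP (by omega : Nat.find hP - 1 < Nat.find hP)
    ((phi_zero_iff hrs (by omega) hj1).mp hφ)

end Char

section Adj

variable {G : Type*} [Group G] {m : ℕ} {s : ℕ → Subgroup G} {φ : ℕ → G → ℚ}
variable (hrs : IsRationalSeries m s φ)
variable (hneg : ∀ j, 1 ≤ j → j < m →
      ∃ g ∈ s (j + 1), ∃ q : ℚ, q < 0 ∧
        ∀ h ∈ s j, φ (j - 1) (g * h * g⁻¹) = q * φ (j - 1) h)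

include hrs hneg

/-- Two left orders agreeing in sign at all levels below `N` agree on `s N`. -/
theorem agree {o o' : LeftOrder G} {N : ℕ} (hN : N ≤ m)
    (h : ∀ i, i < N → (eps s φ o i ↔ eps s φ o' i)) :
    ∀ a b : G, a ∈ s N → b ∈ s N → (o.lt a b ↔ o'.lt a b) := by
  intro a b ha hb
  rw [lt_iff_pos o, lt_iff_pos o']
  by_cases hab : a⁻¹ * b = 1
  · rw [hab]
    exact iff_of_false (o.irrefl 1) (o'.irrefl 1)
  · have hmem : a⁻¹ * b ∈ s N := mul_mem (inv_mem ha) hb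
    obtain ⟨i, hiN, hmem1, hφ⟩ := exists_level hrs hN hmem hab
    rw [char hrs (by omega) ((coh_dom hrs hneg o) i (by omega)).1 hmem1 hφ,
        char hrs (by omega) ((coh_dom hrs hneg o') i (by omega)).1 hmem1 hφ]
    exact iff_congr (h i hiN) Iff.rfl

/-- Two left orders agreeing in sign at all levels are equal. -/
theorem eq_of_eps {o o' : LeftOrder G}
    (h : ∀ i, i < m → (eps s φ o i ↔ eps s φ o' i)) : o = o' := by
  apply lo_ext'
  intro a b
  exact agree hrs hneg (le_refl m) h a b (by rw [hrs.2.1]; trivial) (by rw [hrs.2.1]; trivial)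

/-- The adjustment lemma: conjugating by a suitable element of `s (n+1)`, one can
match the signs of any target order at all levels below `n`, without disturbing
the signs at levels `≥ n`. -/
theorem adj : ∀ n, n < m → ∀ o o' : LeftOrder G, ∃ h ∈ s (n+1),
    (∀ i, i < n → (eps s φ (o.conj h) i ↔ eps s φ o' i)) ∧
    (∀ i, n ≤ i → i < m → (eps s φ (o.conj h) i ↔ eps s φ o i)) := by
  intro n
  induction n with
  | zero =>
    intro _ o o'
    refine ⟨1, one_mem _, fun i hi => by omega, fun i _ _ => by rw [conj_one]⟩
  | succ n ih =>
    intro hn1 o o'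
    by_cases hE : (eps s φ o n ↔ eps s φ o' n)
    · obtain ⟨h', hh'mem, hcl1, hcl2⟩ := ih (by omega) o o'
      refine ⟨h', s_mono hrs (Nat.le_succ _) (by omega) hh'mem, ?_, ?_⟩
      · intro i hi
        rcases Nat.lt_succ_iff_lt_or_eq.mp hi with h | h
        · exact hcl1 i h
        · subst h
          exact (hcl2 i (le_refl _) (by omega)).trans hE
      · intro i hi him
        exact hcl2 i (by omega) him
    · obtain ⟨g, hg2, q, hq, hact₀⟩ := hneg (n+1) (by omega) hn1
      have hact : ∀ h ∈ s (n+1), φ n (g * h * g⁻¹) = q * φ n h := by simpa using hact₀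
      obtain ⟨h', hh'mem, hcl1, hcl2⟩ := ih (by omega) (o.conj g) o'
      have hconj : ∀ i, eps s φ ((o.conj g).conj h') i = eps s φ (o.conj (g * h')) i := by
        intro i; rw [conj_conj]
      refine ⟨g * h', mul_mem hg2 (s_mono hrs (Nat.le_succ _) (by omega) hh'mem), ?_, ?_⟩
      · intro i hi
        rw [← hconj i]
        rcases Nat.lt_succ_iff_lt_or_eq.mp hi with h | h
        · exact hcl1 i h
        · subst h
          have hflip := eps_conj_flip hrs (by omega : i < m)
            ((coh_dom hrs hneg (o.conj g)) i (by omega)).1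
            ((coh_dom hrs hneg o) i (by omega)).1 hq hact
          have h2 := (hcl2 i (le_refl _) (by omega)).trans hflip
          rw [h2]
          tauto
      · intro i hi him
        rw [← hconj i]
        have h1 := hcl2 i (by omega) him
        have h2 := eps_conj_eq hrs him
          ((coh_dom hrs hneg (o.conj g)) i him).1
          ((coh_dom hrs hneg o) i him).1
          (s_mono hrs (by omega : n + 1 + 1 ≤ i + 1) (by omega) hg2)
        exact h1.trans h2

end Adj

end TararinAux

/-- For a Tararin group `G` with rational series of length
`m ≥ 2`, the conjugation action of `G` on `LO(G)` has exactly two orbits;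
moreover, if `γT ∈ G ∖ G_{m-1}` acts on `G_{m-1}/G_{m-2}` as multiplication by
a negative number, then for any two left-orderings `⪯, ⪯'` there is
`g ∈ G_{m-1} ∪ γT·G_{m-1}` such that `g(⪯)` coincides with `⪯'` on `G_{m-1}`. -/
theorem tararin_group_two_orbits
    {G : Type*} [Group G]
    (hlo : Nonempty (LeftOrder G))
    (m : ℕ) (hm : 2 ≤ m) (s : ℕ → Subgroup G) (φ : ℕ → G → ℚ)
    (hrs : IsRationalSeries m s φ)
    (hneg : ∀ j, 1 ≤ j → j < m →
      ∃ g ∈ s (j + 1), ∃ q : ℚ, q < 0 ∧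
        ∀ h ∈ s j, φ (j - 1) (g * h * g⁻¹) = q * φ (j - 1) h)
    (γT : G) (hγT : γT ∉ s (m - 1))
    (hγTneg : ∃ q : ℚ, q < 0 ∧
      ∀ h ∈ s (m - 1), φ (m - 2) (γT * h * γT⁻¹) = q * φ (m - 2) h) :
    (∃ o₁ o₂ : LeftOrder G,
      (∀ g : G, o₁.conj g ≠ o₂) ∧
      (∀ o : LeftOrder G, (∃ g : G, o = o₁.conj g) ∨ (∃ g : G, o = o₂.conj g))) ∧
    (∀ o o' : LeftOrder G, ∃ g : G,
      (g ∈ s (m - 1) ∨ ∃ h ∈ s (m - 1), g = γT * h) ∧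
      ∀ a b : G, a ∈ s (m - 1) → b ∈ s (m - 1) →
        ((o.conj g).lt a b ↔ o'.lt a b)) := by
  classical
  obtain ⟨M, rfl⟩ : ∃ M, m = M + 2 := ⟨m - 2, by omega⟩
  simp only [show M + 2 - 1 = M + 1 from rfl, show M + 2 - 2 = M from rfl] at hγT hγTneg ⊢
  obtain ⟨ob⟩ := hlo
  have hC1 : ∀ (o : LeftOrder G) (i : ℕ), i < M + 2 → TararinAux.Coh s φ o i :=
    fun o i hi => (TararinAux.coh_dom hrs hneg o i hi).1
  have htop : M + 1 < M + 2 := by omega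
  constructor
  · refine ⟨ob, TararinAux.revo ob, ?_, ?_⟩
    · intro g heq
      have h1 := TararinAux.eps_conj_eq hrs htop (hC1 (ob.conj g) _ htop) (hC1 ob _ htop)
        (g := g) (by rw [hrs.2.1]; trivial)
      have h2 := TararinAux.eps_rev hrs htop (hC1 (TararinAux.revo ob) _ htop)
        (hC1 ob _ htop)
      rw [heq] at h1
      exact iff_not_self (h1.symm.trans h2)
    · intro o
      by_cases hE : (TararinAux.eps s φ o (M+1) ↔ TararinAux.eps s φ ob (M+1))
      · left
        obtain ⟨h, hmem, hcl1, hcl2⟩ := TararinAux.adj hrs hneg (M+1) (by omega) ob o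
        have hmatch : ∀ i, i < M + 2 →
            (TararinAux.eps s φ (ob.conj h) i ↔ TararinAux.eps s φ o i) := by
          intro i hi
          rcases (by omega : i < M + 1 ∨ i = M + 1) with h' | h'
          · exact hcl1 i h'
          · subst h'
            exact (hcl2 _ (le_refl _) (by omega)).trans hE.symm
        exact ⟨h, (TararinAux.eq_of_eps hrs hneg hmatch).symm⟩
      · right
        have h2 := TararinAux.eps_rev hrs htop (hC1 (TararinAux.revo ob) _ htop)
          (hC1 ob _ htop)
        have hE' : TararinAux.eps s φ o (M+1) ↔ TararinAux.eps s φ (TararinAux.revo ob) (M+1) := by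
          rw [h2]; tauto
        obtain ⟨h, hmem, hcl1, hcl2⟩ :=
          TararinAux.adj hrs hneg (M+1) (by omega) (TararinAux.revo ob) o
        have hmatch : ∀ i, i < M + 2 →
            (TararinAux.eps s φ ((TararinAux.revo ob).conj h) i ↔ TararinAux.eps s φ o i) := by
          intro i hi
          rcases (by omega : i < M + 1 ∨ i = M + 1) with h' | h'
          · exact hcl1 i h'
          · subst h'
            exact (hcl2 _ (le_refl _) (by omega)).trans hE'.symm
        exact ⟨h, (TararinAux.eq_of_eps hrs hneg hmatch).symm⟩
  · intro o o'
    by_cases hE : (TararinAux.eps s φ o M ↔ TararinAux.eps s φ o' M)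
    · obtain ⟨h, hmem, hcl1, hcl2⟩ := TararinAux.adj hrs hneg M (by omega) o o'
      refine ⟨h, Or.inl hmem, ?_⟩
      intro a b ha hb
      apply TararinAux.agree hrs hneg (show M + 1 ≤ M + 2 by omega) ?_ a b ha hb
      intro i hi
      rcases (by omega : i < M ∨ i = M) with h' | h'
      · exact hcl1 i h'
      · subst h'
        exact (hcl2 _ (le_refl _) (by omega)).trans hE
    · obtain ⟨q, hq, hactT⟩ := hγTneg
      obtain ⟨h, hmem, hcl1, hcl2⟩ :=
        TararinAux.adj hrs hneg M (by omega) (o.conj γT) o'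
      refine ⟨γT * h, Or.inr ⟨h, hmem, rfl⟩, ?_⟩
      intro a b ha hb
      apply TararinAux.agree hrs hneg (show M + 1 ≤ M + 2 by omega) ?_ a b ha hb
      intro i hi
      rw [← TararinAux.conj_conj]
      rcases (by omega : i < M ∨ i = M) with h' | h'
      · exact hcl1 i h'
      · subst h'
        have hflip := TararinAux.eps_conj_flip hrs (by omega)
          (hC1 (o.conj γT) i (by omega)) (hC1 o i (by omega)) hq hactT
        have := (hcl2 _ (le_refl _) (by omega)).trans hflip
        rw [this]
        tauto
end

section
/- Let Γ be a countable group with a faithful action on ℝ by orientation-preserving affine transformations (Γ ≤ Aff₊(ℝ)), and let ⪯ be a left-ordering on Γ induced from this action by a sequence of points (x₁, x₂, …) such that every nontrivial element of Γ moves some xᵢ. If Γ is non-abelian, then ⪯ is a limit of conjugate orderings g(⪯) (g ∈ Γ) distinct from ⪯; in particular ⪯ is not isolated in LO(Γ). -/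
lemma aux_samesign (c u v : ℝ) (huv : 0 < u * v) : 0 < c * u ↔ 0 < c * v := by
  rcases mul_pos_iff.mp huv with ⟨hu, hv⟩ | ⟨hu, hv⟩
  · constructor <;> intro h <;> nlinarith
  · constructor <;> intro h <;> nlinarith

lemma aux_posmul (u v e : ℝ) (h1 : 0 < u * e) (h2 : 0 < v * e) : 0 < u * v := by
  rcases mul_pos_iff.mp h1 with ⟨hu, he⟩ | ⟨hu, he⟩ <;>
    rcases mul_pos_iff.mp h2 with ⟨hv, he'⟩ | ⟨hv, he'⟩ <;>
    first
      | exact mul_pos hu hv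
      | exact mul_pos_of_neg_of_neg hu hv
      | linarith

lemma aux_oppsign (c u v : ℝ) (hc : c ≠ 0) (huv : u * v < 0) : ¬(0 < c * u ↔ 0 < c * v) := by
  rcases mul_neg_iff.mp huv with ⟨hu, hv⟩ | ⟨hu, hv⟩ <;> rcases hc.lt_or_gt with hc' | hc' <;>
    intro h
  · exact absurd (h.mpr (mul_pos_of_neg_of_neg hc' hv))
      (not_lt.mpr (mul_nonpos_of_nonpos_of_nonneg hc'.le hu.le))
  · exact absurd (h.mp (mul_pos hc' hu))
      (not_lt.mpr (mul_nonpos_of_nonneg_of_nonpos hc'.le hv.le))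
  · exact absurd (h.mp (mul_pos_of_neg_of_neg hc' hu))
      (not_lt.mpr (mul_nonpos_of_nonpos_of_nonneg hc'.le hv.le))
  · exact absurd (h.mpr (mul_pos hc' hv))
      (not_lt.mpr (mul_nonpos_of_nonneg_of_nonpos hc'.le hu.le))

lemma aux_intmul (β u v : ℝ) (hβ : 0 < β) (h : β < v - u) : ∃ n : ℤ, u < n * β ∧ (n:ℝ) * β < v := by
  refine ⟨⌊u / β⌋ + 1, ?_, ?_⟩
  · have := Int.lt_floor_add_one (u / β)
    push_cast
    calc u = (u / β) * β := by field_simp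
    _ < (↑⌊u / β⌋ + 1) * β := by apply mul_lt_mul_of_pos_right this hβ
  · have h2 : (⌊u / β⌋ : ℝ) ≤ u / β := Int.floor_le _
    have h3 : (⌊u / β⌋ : ℝ) * β ≤ u := by
      calc (⌊u / β⌋ : ℝ) * β ≤ (u / β) * β := mul_le_mul_of_nonneg_right h2 hβ.le
      _ = u := by field_simp
    push_cast
    nlinarith

/-- Let `Γ` be a countable group acting faithfully on `ℝ` by
orientation-preserving affine maps, and let `⪯` be a left-ordering induced from
this action by a sequence of points `(x i)` separating the elements of `Γ`.
If `Γ` is non-abelian, then `⪯` is a limit of conjugates `g(⪯)` distinct from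
`⪯`; in particular `⪯` is not isolated in `LO(Γ)`. -/
theorem affine_induced_ordering_approximated_by_conjugates
    {Γ : Type*} [Group Γ] [Countable Γ]
    (A : Γ →* Equiv.Perm ℝ) (hfaith : Function.Injective A)
    (haff : ∀ γ : Γ, ∃ a b : ℝ, 0 < a ∧ ∀ t : ℝ, A γ t = a * t + b)
    (x : ℕ → ℝ) (hsep : ∀ γ : Γ, γ ≠ 1 → ∃ i, A γ (x i) ≠ x i)
    (o : LeftOrder Γ)
    (hind : ∀ g h : Γ, o.lt g h ↔
      ∃ i, (∀ j < i, A (g⁻¹ * h) (x j) = x j) ∧ x i < A (g⁻¹ * h) (x i))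
    (hna : ∃ a b : Γ, a * b ≠ b * a) :
    (∀ U : Set (LeftOrder Γ), IsOpen U → o ∈ U →
      ∃ g : Γ, o.conj g ≠ o ∧ o.conj g ∈ U) ∧
    ¬ IsOpen ({o} : Set (LeftOrder Γ)) := by
  classical
  -- §1 affine coefficients
  choose a b hapos hA using haff
  have hABmul : ∀ γ δ : Γ, ∀ t : ℝ, A (γ * δ) t = a γ * (a δ * t + b δ) + b γ := by
    intro γ δ t
    rw [map_mul]
    show A γ (A δ t) = _
    rw [hA δ, hA γ]
  have hkey : ∀ γ δ : Γ, a (γ * δ) = a γ * a δ ∧ b (γ * δ) = a γ * b δ + b γ := by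
    intro γ δ
    have h0 := hA (γ * δ) 0
    have h1 := hA (γ * δ) 1
    have g0 := hABmul γ δ 0
    have g1 := hABmul γ δ 1
    constructor <;> nlinarith [h0, h1, g0, g1]
  have hone : ∀ t : ℝ, A 1 t = t := by
    intro t; rw [map_one]; rfl
  have ha1 : a 1 = 1 ∧ b 1 = 0 := by
    have h0 := hA 1 0
    have h1 := hA 1 1
    rw [hone] at h0 h1
    constructor <;> nlinarith
  have hid : ∀ γ : Γ, (∀ t : ℝ, A γ t = t) → γ = 1 := by
    intro γ h
    apply hfaith
    rw [map_one]
    ext t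
    exact h t
  have hainv : ∀ γ : Γ, a γ⁻¹ = (a γ)⁻¹ := by
    intro γ
    have h := (hkey γ γ⁻¹).1
    rw [mul_inv_cancel, ha1.1] at h
    exact eq_inv_of_mul_eq_one_left (by linarith)
  have hbinv : ∀ γ : Γ, a γ = 1 → b γ⁻¹ = - b γ := by
    intro γ hγ
    have h1 := (hkey γ γ⁻¹).2
    rw [mul_inv_cancel, ha1.2, hγ] at h1
    linarith
  -- §2 translations and homotheties
  have htriv : ∀ γ : Γ, a γ = 1 → b γ = 0 → γ = 1 := by
    intro γ h1 h2
    apply hid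
    intro t; rw [hA, h1, h2]; ring
  obtain ⟨τ, haτ, hbτ⟩ : ∃ τ : Γ, a τ = 1 ∧ b τ ≠ 0 := by
    obtain ⟨u, v, huv⟩ := hna
    refine ⟨u * v * (v * u)⁻¹, ?_, ?_⟩
    · have h1 := (hkey (u*v) (v*u)⁻¹).1
      have h2 := (hkey u v).1
      have h3 := (hkey v u).1
      have h4 := hainv (v*u)
      rw [h1, h2, h4, h3]
      field_simp [(hapos u).ne', (hapos v).ne']
    · intro hb0
      apply huv
      have h1 : u * v * (v * u)⁻¹ = 1 := by
        apply htriv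
        · have h1 := (hkey (u*v) (v*u)⁻¹).1
          have h2 := (hkey u v).1
          have h3 := (hkey v u).1
          have h4 := hainv (v*u)
          rw [h1, h2, h4, h3]; field_simp [(hapos u).ne', (hapos v).ne']
        · exact hb0
      exact mul_inv_eq_one.mp h1
  obtain ⟨hh, hah⟩ : ∃ h : Γ, a h ≠ 1 := by
    by_contra hc
    push_neg at hc
    obtain ⟨u, v, huv⟩ := hna
    apply huv
    have h1 : u * v * (v * u)⁻¹ = 1 := by
      apply htriv
      · rw [(hkey (u*v) (v*u)⁻¹).1, hc, hc]; ring
      · have e1 := (hkey (u*v) (v*u)⁻¹).2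
        have e2 := (hkey u v).2
        have e3 := (hkey v u).2
        have e4 := hbinv (v*u) (hc _)
        rw [e1, e4, e3, e2, (hkey u v).1, hc u, hc v]
        ring
    exact mul_inv_eq_one.mp h1
  have hpow : ∀ (σ : Γ), a σ = 1 → ∀ m : ℕ, a (σ ^ m) = 1 ∧ b (σ ^ m) = m * b σ := by
    intro σ hσ m
    induction m with
    | zero => simpa using ha1
    | succ k ih =>
      rw [pow_succ]
      refine ⟨by rw [(hkey _ _).1, ih.1, hσ]; ring, ?_⟩
      rw [(hkey _ _).2, ih.1, ih.2]
      push_cast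
      try ring
  have hzpow : ∀ (σ : Γ), a σ = 1 → ∀ n : ℤ, ∃ σ' : Γ, a σ' = 1 ∧ b σ' = n * b σ := by
    intro σ hσ n
    cases n with
    | ofNat m =>
      refine ⟨σ ^ m, (hpow σ hσ m).1, ?_⟩
      rw [(hpow σ hσ m).2]
      norm_num
    | negSucc m =>
      have hai : a σ⁻¹ = 1 := by rw [hainv, hσ]; norm_num
      refine ⟨σ⁻¹ ^ (m+1), (hpow σ⁻¹ hai (m+1)).1, ?_⟩
      rw [(hpow σ⁻¹ hai (m+1)).2, hbinv σ hσ]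
      push_cast [Int.negSucc_eq]
      ring
  have hsmall : ∀ δ : ℝ, 0 < δ → ∃ σ : Γ, a σ = 1 ∧ 0 < b σ ∧ b σ < δ := by
    intro δ hδ
    obtain ⟨τ', haτ', hbτ'⟩ : ∃ τ' : Γ, a τ' = 1 ∧ 0 < b τ' := by
      rcases hbτ.lt_or_gt with hneg | hpos
      · exact ⟨τ⁻¹, by rw [hainv, haτ]; norm_num, by rw [hbinv τ haτ]; linarith⟩
      · exact ⟨τ, haτ, hpos⟩
    obtain ⟨h', hah1, hah0⟩ : ∃ h' : Γ, a h' < 1 ∧ 0 < a h' := by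
      rcases hah.lt_or_gt with h1 | h1
      · exact ⟨hh, h1, hapos hh⟩
      · refine ⟨hh⁻¹, ?_, by rw [hainv]; exact inv_pos.mpr (hapos hh)⟩
        rw [hainv]
        exact inv_lt_one_of_one_lt₀ h1
    obtain ⟨n, hn⟩ : ∃ n : ℕ, (a h') ^ n * b τ' < δ := by
      obtain ⟨n, hn⟩ := exists_pow_lt_of_lt_one (div_pos hδ hbτ') hah1
      exact ⟨n, by rw [← lt_div_iff₀ hbτ']; exact hn⟩
    have hahn : ∀ m : ℕ, a (h' ^ m) = (a h') ^ m := by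
      intro m
      induction m with
      | zero => simpa using ha1.1
      | succ k ih => rw [pow_succ, pow_succ, (hkey _ _).1, ih]
    refine ⟨(h' ^ n) * τ' * (h' ^ n)⁻¹, ?_, ?_, ?_⟩
    · rw [(hkey _ _).1, (hkey _ _).1, hainv, haτ', hahn]
      field_simp
    · rw [(hkey _ _).2, (hkey _ _).2]
      have e4 : a ((h'^n) * τ') = a (h'^n) := by rw [(hkey _ _).1, haτ']; ring
      have e5 : a (h'^n) * b ((h'^n)⁻¹) + b (h'^n) = 0 := by
        have := (hkey (h'^n) (h'^n)⁻¹).2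
        rw [mul_inv_cancel, ha1.2] at this
        linarith
      have : a (h' ^ n) * b τ' > 0 := mul_pos (by rw [hahn]; positivity) hbτ'
      rw [e4]
      nlinarith [e5]
    · rw [(hkey _ _).2, (hkey _ _).2]
      have e4 : a ((h'^n) * τ') = a (h'^n) := by rw [(hkey _ _).1, haτ']; ring
      have e5 : a (h'^n) * b ((h'^n)⁻¹) + b (h'^n) = 0 := by
        have := (hkey (h'^n) (h'^n)⁻¹).2
        rw [mul_inv_cancel, ha1.2] at this
        linarith
      rw [e4]
      have : a (h' ^ n) * b τ' < δ := by rw [hahn]; exact hn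
      nlinarith [e5]
  have htransIn : ∀ u v : ℝ, u < v → ∃ σ : Γ, a σ = 1 ∧ u < b σ ∧ b σ < v := by
    intro u v huv
    obtain ⟨σ0, ha0, hb0, hb0'⟩ := hsmall (v - u) (by linarith)
    obtain ⟨n, hn1, hn2⟩ := aux_intmul (b σ0) u v hb0 hb0'
    obtain ⟨σ', ha', hb'⟩ := hzpow σ0 ha0 n
    exact ⟨σ', ha', by rw [hb']; exact hn1, by rw [hb']; exact hn2⟩
  -- §3 the Pos predicate
  set Pos : ℝ → Γ → Prop :=
    fun ε f => ∃ i, (∀ j < i, A f (x j + ε) = x j + ε) ∧ x i + ε < A f (x i + ε) with hPos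
  set q : Γ → ℝ := fun f => b f / (1 - a f) with hq
  have hPos0 : ∀ f : Γ, o.lt 1 f ↔ Pos 0 f := by
    intro f
    rw [hind]
    simp only [inv_one, one_mul, hPos, add_zero]
  have hconjA : ∀ g f : Γ, a g = 1 → ∀ t : ℝ, A (g * f * g⁻¹) t = A f (t - b g) + b g := by
    intro g f hg t
    rw [map_mul, map_mul]
    show A g (A f (A g⁻¹ t)) = _
    rw [hA g⁻¹, hainv g, hg, hbinv g hg, hA g, hg]
    have e : (1:ℝ)⁻¹ * t + -(b g) = t - b g := by ring
    rw [e]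
    ring
  have hPosConj : ∀ g f : Γ, a g = 1 → ((o.conj g).lt 1 f ↔ Pos (-(b g)) f) := by
    intro g f hg
    show o.lt (g * 1 * g⁻¹) (g * f * g⁻¹) ↔ _
    rw [mul_one, mul_inv_cancel]
    rw [hind]
    simp only [inv_one, one_mul, hPos]
    apply exists_congr
    intro i
    have key : ∀ y : ℝ, A (g * f * g⁻¹) y = A f (y + -(b g)) + b g := by
      intro y
      rw [hconjA g f hg y, sub_eq_add_neg]
    constructor
    · rintro ⟨hfix, hup⟩
      refine ⟨fun j hj => ?_, ?_⟩
      · have := hfix j hj; rw [key] at this; linarith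
      · have := hup; rw [key] at this; linarith
    · rintro ⟨hfix, hup⟩
      refine ⟨fun j hj => ?_, ?_⟩
      · rw [key]; have := hfix j hj; linarith
      · rw [key]; linarith
  have hPosIdx0 : ∀ (ε : ℝ) (f : Γ), A f (x 0 + ε) ≠ x 0 + ε →
      (Pos ε f ↔ x 0 + ε < A f (x 0 + ε)) := by
    intro ε f hne
    constructor
    · rintro ⟨i, hfix, hup⟩
      rcases Nat.eq_zero_or_pos i with rfl | hi
      · exact hup
      · exact absurd (hfix 0 hi) hne
    · intro hlt
      exact ⟨0, fun j hj => absurd hj (Nat.not_lt_zero j), hlt⟩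
  have hPosTrans : ∀ (ε : ℝ) (f : Γ), a f = 1 → (Pos ε f ↔ 0 < b f) := by
    intro ε f haf
    constructor
    · rintro ⟨i, _, hup⟩
      rw [hA, haf] at hup
      linarith
    · intro hb
      refine ⟨0, fun j hj => absurd hj (Nat.not_lt_zero j), ?_⟩
      rw [hA, haf]
      linarith
  have hdiff : ∀ f : Γ, a f ≠ 1 → ∀ y : ℝ, A f y - y = (a f - 1) * (y - q f) := by
    intro f haf y
    have hne : 1 - a f ≠ 0 := sub_ne_zero_of_ne (Ne.symm haf)
    have hqf : (a f - 1) * q f = -(b f) := by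
      have e : q f = b f / (1 - a f) := rfl
      rw [e]
      field_simp
      ring
    rw [hA]
    linear_combination hqf
  have hfixq : ∀ f : Γ, a f ≠ 1 → ∀ y : ℝ, (A f y = y ↔ y = q f) := by
    intro f haf y
    have hd := hdiff f haf y
    have hne : a f - 1 ≠ 0 := sub_ne_zero_of_ne haf
    constructor
    · intro hfy
      rw [hfy] at hd
      have h0 : (a f - 1) * (y - q f) = 0 := by linarith
      rcases mul_eq_zero.mp h0 with h | h
      · exact absurd h hne
      · linarith
    · intro hy
      rw [hy] at hd ⊢
      simp at hd
      linarith
  have hupq : ∀ f : Γ, a f ≠ 1 → ∀ y : ℝ, (y < A f y ↔ 0 < (a f - 1) * (y - q f)) := by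
    intro f haf y
    have hd := hdiff f haf y
    constructor <;> intro <;> linarith
  have hPosHom : ∀ (ε : ℝ) (f : Γ), a f ≠ 1 → x 0 + ε ≠ q f →
      (Pos ε f ↔ 0 < (a f - 1) * (x 0 + ε - q f)) := by
    intro ε f haf hne
    rw [hPosIdx0 ε f (fun hfix => hne ((hfixq f haf _).mp hfix))]
    exact hupq f haf _
  -- §4 the reference sign d
  obtain ⟨d, hd0, hdspec⟩ : ∃ d : ℝ, d ≠ 0 ∧
      ∀ f : Γ, a f ≠ 1 → x 0 = q f → (Pos 0 f ↔ 0 < (a f - 1) * d) := by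
    by_cases hB : ∃ j, x j ≠ x 0
    · refine ⟨x (Nat.find hB) - x 0, sub_ne_zero_of_ne (Nat.find_spec hB), ?_⟩
      intro f haf hx0
      constructor
      · rintro ⟨i, hfix, hup⟩
        simp only [add_zero] at hup
        have hupq' := (hupq f haf (x i)).mp hup
        have hxiq : x i ≠ q f := by
          intro e
          rw [e] at hupq'
          simp at hupq'
        have hxi : x i ≠ x 0 := by rw [hx0]; exact hxiq
        have hle : Nat.find hB ≤ i := Nat.find_min' hB hxi
        rcases eq_or_lt_of_le hle with e | hlt
        · rw [← e] at hupq'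
          rw [← hx0] at hupq'
          exact hupq'
        · exfalso
          have hfx := hfix (Nat.find hB) hlt
          simp only [add_zero] at hfx
          exact Nat.find_spec hB (by rw [(hfixq f haf _).mp hfx, ← hx0])
      · intro hpos
        refine ⟨Nat.find hB, ?_, ?_⟩
        · intro j hj
          have hxj : x j = x 0 := not_not.mp (Nat.find_min hB hj)
          simp only [add_zero]
          rw [hxj, hx0]
          exact (hfixq f haf _).mpr rfl
        · simp only [add_zero]
          apply (hupq f haf _).mpr
          rw [← hx0]
          exact hpos
    · refine ⟨1, one_ne_zero, ?_⟩
      intro f haf hx0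
      exfalso
      push_neg at hB
      have hf1 : f ≠ 1 := fun e => haf (by rw [e, ha1.1])
      obtain ⟨i, hi⟩ := hsep f hf1
      apply hi
      rw [hB i, hx0]
      exact (hfixq f haf _).mpr rfl
  -- §5 main construction
  have main : ∀ U : Set (LeftOrder Γ), IsOpen U → o ∈ U →
      ∃ g : Γ, o.conj g ≠ o ∧ o.conj g ∈ U := by
    intro U hU hoU
    obtain ⟨V, hV, hVeq⟩ := isOpen_induced_iff.mp hU
    have hcV : LeftOrder.cone o ∈ V := by rw [← hVeq] at hoU; exact hoU
    obtain ⟨I, w, hw, hsub⟩ := (isOpen_pi_iff.mp hV) (LeftOrder.cone o) hcV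
    -- the gap δ
    obtain ⟨δ, hδpos, hδ⟩ : ∃ δ : ℝ, 0 < δ ∧
        ∀ f ∈ I, a f ≠ 1 → x 0 ≠ q f → δ ≤ |x 0 - q f| := by
      refine ⟨(insert (1:ℝ) ((I.filter (fun f => a f ≠ 1 ∧ x 0 ≠ q f)).image
          (fun f => |x 0 - q f|))).min' ⟨1, Finset.mem_insert_self _ _⟩, ?_, ?_⟩
      · have hposS : ∀ y ∈ insert (1:ℝ) ((I.filter (fun f => a f ≠ 1 ∧ x 0 ≠ q f)).image
            (fun f => |x 0 - q f|)), 0 < y := by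
          intro y hy
          rcases Finset.mem_insert.mp hy with h | h
          · rw [h]; norm_num
          · obtain ⟨f, hf, hfe⟩ := Finset.mem_image.mp h
            rw [← hfe]
            exact abs_pos.mpr (sub_ne_zero_of_ne (Finset.mem_filter.mp hf).2.2)
        exact hposS _ (Finset.min'_mem _ _)
      · intro f hfI haf hne
        apply Finset.min'_le
        exact Finset.mem_insert_of_mem
          (Finset.mem_image_of_mem _ (Finset.mem_filter.mpr ⟨hfI, haf, hne⟩))
    -- the shift ε = b σ
    obtain ⟨σ, haσ, hσd, hσl, hσr⟩ : ∃ σ : Γ, a σ = 1 ∧ 0 < b σ * d ∧ -δ < b σ ∧ b σ < δ := by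
      rcases hd0.lt_or_gt with hd | hd
      · obtain ⟨σ, h1, h2, h3⟩ := htransIn (-δ) 0 (by linarith)
        exact ⟨σ, h1, mul_pos_of_neg_of_neg h3 hd, h2, by linarith⟩
      · obtain ⟨σ, h1, h2, h3⟩ := htransIn 0 δ hδpos
        exact ⟨σ, h1, mul_pos h2 hd, by linarith, h3⟩
    have hbσ0 : b σ ≠ 0 := by
      intro e; rw [e] at hσd; simp at hσd
    set g : Γ := σ⁻¹ with hgdef
    have hag : a g = 1 := by rw [hgdef, hainv, haσ]; norm_num
    have hbg : b g = -(b σ) := by rw [hgdef, hbinv σ haσ]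
    have hgiff : ∀ f : Γ, ((o.conj g).lt 1 f ↔ Pos (b σ) f) := by
      intro f
      have := hPosConj g f hag
      rw [hbg, neg_neg] at this
      exact this
    -- agreement on I
    have hagree : ∀ f ∈ I, ((o.conj g).lt 1 f ↔ o.lt 1 f) := by
      intro f hf
      rw [hgiff f, hPos0 f]
      by_cases haf : a f = 1
      · rw [hPosTrans _ _ haf, hPosTrans _ _ haf]
      · by_cases hx0 : x 0 = q f
        · have hne : x 0 + b σ ≠ q f := by
            rw [← hx0]
            intro e
            exact hbσ0 (by linarith)
          rw [hPosHom (b σ) f haf hne, hdspec f haf hx0]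
          have e : x 0 + b σ - q f = b σ := by rw [← hx0]; ring
          rw [e]
          exact aux_samesign _ _ _ hσd
        · have hprod : 0 < (x 0 - q f) * (x 0 + b σ - q f) := by
            have habs := hδ f hf haf hx0
            rcases (sub_ne_zero_of_ne hx0).lt_or_gt with hlt | hlt
            · rw [abs_of_neg hlt] at habs
              exact mul_pos_of_neg_of_neg hlt (by linarith)
            · rw [abs_of_pos hlt] at habs
              exact mul_pos hlt (by linarith)
          have hne2 : x 0 + b σ ≠ q f := by
            intro e
            have : x 0 + b σ - q f = 0 := by rw [e]; ring
            rw [this, mul_zero] at hprod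
            exact lt_irrefl 0 hprod
          rw [hPosHom _ f haf hne2, hPosHom 0 f haf (by rw [add_zero]; exact hx0)]
          rw [add_zero]
          exact aux_samesign _ _ _ (by rw [mul_comm] at hprod; exact hprod)
    have hcone : ∀ f ∈ I, (o.conj g).cone f = o.cone f := by
      intro f hf
      show decide _ = decide _
      exact decide_eq_decide.mpr (hagree f hf)
    refine ⟨g, ?_, ?_⟩
    · -- distinctness
      have hqh := hapos hh
      obtain ⟨σt, haσt, ht1, ht2⟩ : ∃ σt : Γ, a σt = 1 ∧
          0 < (q hh + b σt - x 0) * b σ ∧ 0 < (x 0 + b σ - (q hh + b σt)) * b σ := by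
        rcases hbσ0.lt_or_gt with hbs | hbs
        · obtain ⟨σt, h1, h2, h3⟩ := htransIn (x 0 + b σ - q hh) (x 0 - q hh) (by linarith)
          exact ⟨σt, h1, mul_pos_of_neg_of_neg (by linarith) hbs,
            mul_pos_of_neg_of_neg (by linarith) hbs⟩
        · obtain ⟨σt, h1, h2, h3⟩ := htransIn (x 0 - q hh) (x 0 + b σ - q hh) (by linarith)
          exact ⟨σt, h1, mul_pos (by linarith) hbs, mul_pos (by linarith) hbs⟩
      set f : Γ := σt * hh * σt⁻¹ with hfdef
      have haf : a f = a hh := by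
        rw [hfdef, (hkey _ _).1, (hkey _ _).1, hainv, haσt]
        norm_num
      have haf1 : a f ≠ 1 := by rw [haf]; exact hah
      have hbf : b f = b hh + b σt * (1 - a hh) := by
        rw [hfdef, (hkey _ _).2, (hkey _ _).2, (hkey _ _).1, hbinv σt haσt, haσt]
        ring
      have hqf : q f = q hh + b σt := by
        have e1 : q f = b f / (1 - a f) := rfl
        have e2 : q hh = b hh / (1 - a hh) := rfl
        rw [e1, e2, hbf, haf]
        have hne : 1 - a hh ≠ 0 := sub_ne_zero_of_ne (Ne.symm hah)
        field_simp
        try ring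
      intro heq
      have hlt : (o.conj g).lt = o.lt := congrArg LeftOrder.lt heq
      have hiff : Pos (b σ) f ↔ Pos 0 f := by
        rw [← hgiff f, ← hPos0 f, hlt]
      rw [← hqf] at ht1 ht2
      have hx0ne : x 0 ≠ q f := by
        intro e
        rw [← e] at ht1
        nlinarith [ht1]
      have hxεne : x 0 + b σ ≠ q f := by
        intro e
        rw [← e] at ht2
        nlinarith [ht2]
      rw [hPosHom (b σ) f haf1 hxεne, hPosHom 0 f haf1 (by rw [add_zero]; exact hx0ne)] at hiff
      rw [add_zero] at hiff
      have hopp : (x 0 + b σ - q f) * (x 0 - q f) < 0 := by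
        have := aux_posmul (q f - x 0) (x 0 + b σ - q f) (b σ) ht1 ht2
        nlinarith [this]
      exact aux_oppsign (a f - 1) _ _ (sub_ne_zero_of_ne haf1) hopp hiff
    · -- membership in U
      rw [← hVeq]
      apply hsub
      rw [Set.mem_pi]
      intro f hf
      rw [hcone f hf]
      exact (hw f hf).2
  exact ⟨main, fun hop => by
    obtain ⟨g, hne, hmem⟩ := main {o} hop rfl
    exact hne hmem⟩
end
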